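/- arXiv:2605.18307 — 4 statements merged into one kernel-verified Lean document; each statement's English description precedes it below -/
import Mathlib

section
/- Let α ∈ (0,1). For every continuously differentiable function u : 𝕋 × [0,1] → ℝ with u(θ,0) = 0 for all θ ∈ 𝕋, one has ((1−α)²/4) ∫_𝕋 ∫_0^1 u(θ,r)² dr dθ ≤ ∫_𝕋 ∫_0^1 r^{α} (∂_r u(θ,r))² dr dθ. In particular the Rayleigh quotient (∫_Ω ((∂_θ u)² + r^α (∂_r u)²) dz)/(∫_Ω u² dz) of any nonzero such u is at least (1−α)²/4. -/
open MeasureTheory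

section AuxHardy
open MeasureTheory Set Topology

lemma aux_quad {x a b : ℝ} (ha : 0 ≤ a) (hb : 0 ≤ b)
    (h : ∀ ε : ℝ, 0 < ε → |x| ≤ a / (2 * ε) + ε * b / 2) : x ^ 2 ≤ a * b := by
  have key : ∀ ε : ℝ, 0 ≤ b * (ε * ε) + -(2 * |x|) * ε + a := by
    intro ε
    rcases le_or_gt ε 0 with hε | hε
    · nlinarith [abs_nonneg x, mul_nonneg (neg_nonneg.2 hε) (abs_nonneg x), sq_nonneg ε]
    · have h1 := h ε hε
      have h2 : (0:ℝ) < 2 * ε := by linarith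
      have h3 : 2 * ε * |x| ≤ 2 * ε * (a / (2 * ε) + ε * b / 2) :=
        mul_le_mul_of_nonneg_left h1 (le_of_lt h2)
      have h4 : 2 * ε * (a / (2 * ε) + ε * b / 2) = a + ε ^ 2 * b := by
        field_simp
      nlinarith
  have hd := discrim_le_zero key
  rw [discrim] at hd
  nlinarith [sq_abs x]


lemma myIntOnBdd {f : ℝ → ℝ} {s : Set ℝ} (hs : MeasureTheory.volume s ≠ ⊤) {M : ℝ}
    (hm : AEStronglyMeasurable f (MeasureTheory.volume.restrict s))
    (hb : ∀ᵐ x ∂(MeasureTheory.volume.restrict s), ‖f x‖ ≤ M) :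
    IntegrableOn f s :=
  ⟨hm, MeasureTheory.HasFiniteIntegral.restrict_of_bounded (C := M) hs.lt_top hb⟩

lemma hardy1d {α : ℝ} (hα0 : 0 < α) (hα1 : α < 1) {v : ℝ → ℝ}
    (hv : ContDiffOn ℝ 1 v (Set.Icc 0 1)) (hv0 : v 0 = 0) :
    ((1 - α) ^ 2 / 4) * ∫ r in Set.Ioo (0:ℝ) 1, (v r) ^ 2
      ≤ ∫ r in Set.Ioo (0:ℝ) 1, r ^ α * (deriv v r) ^ 2 := by
  set E := ∫ r in Set.Ioo (0:ℝ) 1, r ^ α * (deriv v r) ^ 2 with hEdef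
  -- bound on the derivative
  have hd : ContinuousOn (derivWithin v (Set.Icc 0 1)) (Set.Icc 0 1) :=
    hv.continuousOn_derivWithin (uniqueDiffOn_Icc zero_lt_one) le_rfl
  obtain ⟨M, hM⟩ := isCompact_Icc.exists_bound_of_continuousOn hd
  have hder_eq : ∀ r ∈ Set.Ioo (0:ℝ) 1, derivWithin v (Set.Icc 0 1) r = deriv v r := by
    intro r hr
    exact derivWithin_of_mem_nhds (Icc_mem_nhds hr.1 hr.2)
  have hderM : ∀ r ∈ Set.Ioo (0:ℝ) 1, |deriv v r| ≤ M := by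
    intro r hr
    rw [← hder_eq r hr]
    simpa using hM r (Set.Ioo_subset_Icc_self hr)
  have hderiv_meas : Measurable (deriv v) := measurable_deriv v
  -- integrability of the weighted square on Ioo 0 1
  have hrpowc : Continuous (fun s : ℝ => s ^ α) :=
    continuousOn_univ.1
      (continuousOn_id.rpow_const fun x _ => Or.inr (le_of_lt hα0))
  have hg_meas : Measurable (fun s : ℝ => s ^ α * (deriv v s) ^ 2) :=
    hrpowc.measurable.mul (hderiv_meas.pow_const 2)
  have hg_int : IntegrableOn (fun s : ℝ => s ^ α * (deriv v s) ^ 2) (Set.Ioo 0 1) := by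
    refine Measure.integrableOn_of_bounded (M := M ^ 2) measure_Ioo_lt_top.ne
      hg_meas.aestronglyMeasurable ?_
    filter_upwards [ae_restrict_mem measurableSet_Ioo] with s hs
    have h1 : s ^ α ≤ 1 := Real.rpow_le_one (le_of_lt hs.1) (le_of_lt hs.2) (le_of_lt hα0)
    have h2 : (0:ℝ) ≤ s ^ α := Real.rpow_nonneg (le_of_lt hs.1) α
    have h3 := hderM s hs
    have h4 : (deriv v s) ^ 2 ≤ M ^ 2 := by nlinarith [abs_nonneg (deriv v s), sq_abs (deriv v s)]
    rw [Real.norm_eq_abs, abs_of_nonneg (mul_nonneg h2 (sq_nonneg _))]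
    nlinarith
  have hg_nonneg : ∀ᵐ s ∂(volume.restrict (Set.Ioo (0:ℝ) 1)),
      0 ≤ s ^ α * (deriv v s) ^ 2 := by
    filter_upwards [ae_restrict_mem measurableSet_Ioo] with s hs
    exact mul_nonneg (Real.rpow_nonneg (le_of_lt hs.1) α) (sq_nonneg _)
  have hE_nonneg : 0 ≤ E := integral_nonneg_of_ae hg_nonneg
  -- pointwise bound
  have key : ∀ r ∈ Set.Ioo (0:ℝ) 1, (v r) ^ 2 ≤ (r ^ (1 - α) / (1 - α)) * E := by
    intro r hr
    have hr0 : (0:ℝ) < r := hr.1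
    have hr1 : r < 1 := hr.2
    have hsub : Set.Ioc (0:ℝ) r ⊆ Set.Ioo 0 1 := fun s hs => ⟨hs.1, lt_of_le_of_lt hs.2 hr1⟩
    -- FTC
    have hftc : ∫ s in (0:ℝ)..r, deriv v s = v r - v 0 := by
      apply intervalIntegral.integral_eq_sub_of_hasDeriv_right_of_le (le_of_lt hr0)
      · exact hv.continuousOn.mono (Set.Icc_subset_Icc le_rfl (le_of_lt hr1))
      · intro s hs
        have hs' : s ∈ Set.Ioo (0:ℝ) 1 := ⟨hs.1, lt_trans hs.2 hr1⟩
        have : DifferentiableAt ℝ v s :=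
          (hv.differentiableOn one_ne_zero s (Set.Ioo_subset_Icc_self hs')).differentiableAt
            (Icc_mem_nhds hs'.1 hs'.2)
        exact this.hasDerivAt.hasDerivWithinAt
      · rw [intervalIntegrable_iff_integrableOn_Ioc_of_le (le_of_lt hr0)]
        refine Measure.integrableOn_of_bounded (M := M) measure_Ioc_lt_top.ne
          hderiv_meas.aestronglyMeasurable ?_
        filter_upwards [ae_restrict_mem measurableSet_Ioc] with s hs
        exact hderM s (hsub hs)
    have hvr : v r = ∫ s in (0:ℝ)..r, deriv v s := by rw [hftc, hv0, sub_zero]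
    -- integrability of |deriv v| on Ioc 0 r
    have habs_int : IntegrableOn (fun s => |deriv v s|) (Set.Ioc 0 r) := by
      refine Measure.integrableOn_of_bounded (M := M) measure_Ioc_lt_top.ne
        hderiv_meas.abs.aestronglyMeasurable ?_
      filter_upwards [ae_restrict_mem measurableSet_Ioc] with s hs
      simpa [abs_abs] using hderM s (hsub hs)
    -- the rpow integrals
    have hrpow_int : IntegrableOn (fun s : ℝ => s ^ (-α)) (Set.Ioc 0 r) := by
      have := intervalIntegral.intervalIntegrable_rpow' (a := 0) (b := r) (r := -α) (by linarith)
      rwa [intervalIntegrable_iff_integrableOn_Ioc_of_le (le_of_lt hr0)] at this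
    have hrpow_val : ∫ s in Set.Ioc (0:ℝ) r, s ^ (-α) = r ^ (1 - α) / (1 - α) := by
      rw [← intervalIntegral.integral_of_le (le_of_lt hr0)]
      rw [integral_rpow (Or.inl (by linarith))]
      rw [Real.zero_rpow (by linarith : -α + 1 ≠ 0)]
      norm_num
      rw [show -α + 1 = 1 - α by ring]
    -- Young inequality for each ε
    have hyoung : ∀ ε : ℝ, 0 < ε →
        |v r| ≤ (r ^ (1 - α) / (1 - α)) / (2 * ε) + ε * E / 2 := by
      intro ε hε
      have hmaj_int : IntegrableOn
          (fun s => s ^ (-α) / (2 * ε) + ε * (s ^ α * (deriv v s) ^ 2) / 2) (Set.Ioc 0 r) :=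
        (hrpow_int.div_const _).add (((hg_int.mono_set hsub).const_mul ε).div_const 2)
      have hptwise : ∀ s ∈ Set.Ioc (0:ℝ) r,
          |deriv v s| ≤ s ^ (-α) / (2 * ε) + ε * (s ^ α * (deriv v s) ^ 2) / 2 := by
        intro s hs
        have hs0 : (0:ℝ) < s := hs.1
        have hb : (0:ℝ) < s ^ α := Real.rpow_pos_of_pos hs0 _
        have hneg : s ^ (-α) = (s ^ α)⁻¹ := Real.rpow_neg (le_of_lt hs0) α
        have hEq : s ^ (-α) / (2 * ε) + ε * (s ^ α * (deriv v s) ^ 2) / 2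
            = (1 + (ε * (s ^ α) * deriv v s) ^ 2) / (2 * ε * (s ^ α)) := by
          rw [hneg]; field_simp
        rw [hEq, le_div_iff₀ (by positivity)]
        rcases abs_cases (deriv v s) with ⟨h, _⟩ | ⟨h, _⟩ <;> rw [h]
        · nlinarith [sq_nonneg (ε * (s ^ α) * deriv v s - 1)]
        · nlinarith [sq_nonneg (ε * (s ^ α) * deriv v s + 1)]
      have h1 : |v r| ≤ ∫ s in Set.Ioc (0:ℝ) r, |deriv v s| := by
        rw [hvr]
        rw [intervalIntegral.integral_of_le (le_of_lt hr0)]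
        simpa [Real.norm_eq_abs] using
          norm_integral_le_integral_norm (μ := volume.restrict (Set.Ioc (0:ℝ) r))
            (fun s => deriv v s)
      have h2 : ∫ s in Set.Ioc (0:ℝ) r, |deriv v s|
          ≤ ∫ s in Set.Ioc (0:ℝ) r, (s ^ (-α) / (2 * ε) + ε * (s ^ α * (deriv v s) ^ 2) / 2) :=
        setIntegral_mono_on habs_int hmaj_int measurableSet_Ioc hptwise
      have h3 : ∫ s in Set.Ioc (0:ℝ) r, (s ^ (-α) / (2 * ε) + ε * (s ^ α * (deriv v s) ^ 2) / 2)
          = (∫ s in Set.Ioc (0:ℝ) r, s ^ (-α)) / (2 * ε)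
            + ε * (∫ s in Set.Ioc (0:ℝ) r, s ^ α * (deriv v s) ^ 2) / 2 := by
        rw [integral_add (hrpow_int.div_const _) (((hg_int.mono_set hsub).const_mul ε).div_const 2),
          integral_div, integral_div, integral_const_mul]
      have h4 : ∫ s in Set.Ioc (0:ℝ) r, s ^ α * (deriv v s) ^ 2 ≤ E := by
        apply setIntegral_mono_set hg_int hg_nonneg
        exact HasSubset.Subset.eventuallyLE hsub
      calc |v r| ≤ _ := h1
        _ ≤ _ := h2
        _ = _ := h3
        _ ≤ (r ^ (1 - α) / (1 - α)) / (2 * ε) + ε * E / 2 := by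
            rw [hrpow_val]
            have : ε * (∫ s in Set.Ioc (0:ℝ) r, s ^ α * (deriv v s) ^ 2) ≤ ε * E :=
              mul_le_mul_of_nonneg_left h4 (le_of_lt hε)
            linarith
    have hA : 0 ≤ r ^ (1 - α) / (1 - α) :=
      div_nonneg (Real.rpow_nonneg (le_of_lt hr0) _) (by linarith)
    exact aux_quad hA hE_nonneg hyoung
  -- integrate the pointwise bound
  have hmaj_int : IntegrableOn (fun r : ℝ => (r ^ (1 - α) / (1 - α)) * E) (Set.Ioo 0 1) := by
    have := intervalIntegral.intervalIntegrable_rpow' (a := 0) (b := 1) (r := 1 - α) (by linarith)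
    rw [intervalIntegrable_iff_integrableOn_Ioc_of_le zero_le_one] at this
    have h' : IntegrableOn (fun s : ℝ => s ^ (1 - α)) (Set.Ioo 0 1) :=
      this.mono_set Set.Ioo_subset_Ioc_self
    exact (h'.div_const _).mul_const E
  have hint_le : ∫ r in Set.Ioo (0:ℝ) 1, (v r) ^ 2
      ≤ ∫ r in Set.Ioo (0:ℝ) 1, (r ^ (1 - α) / (1 - α)) * E := by
    apply integral_mono_of_nonneg
    · filter_upwards with r; exact sq_nonneg _
    · exact hmaj_int
    · filter_upwards [ae_restrict_mem measurableSet_Ioo] with r hr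
      exact key r hr
  have hmaj_val : ∫ r in Set.Ioo (0:ℝ) 1, (r ^ (1 - α) / (1 - α)) * E
      = (1 / ((2 - α) * (1 - α))) * E := by
    rw [show (fun r : ℝ => (r ^ (1 - α) / (1 - α)) * E)
        = fun r : ℝ => (E / (1 - α)) * r ^ (1 - α) by funext r; ring]
    rw [integral_const_mul]
    rw [Measure.restrict_congr_set Ioo_ae_eq_Ioc]
    rw [← intervalIntegral.integral_of_le zero_le_one]
    rw [integral_rpow (Or.inl (by linarith))]
    rw [Real.zero_rpow (by linarith : (1:ℝ) - α + 1 ≠ 0), Real.one_rpow]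
    have h2 : (1:ℝ) - α + 1 = 2 - α := by ring
    rw [h2]
    field_simp
    ring
  have hfinal : ∫ r in Set.Ioo (0:ℝ) 1, (v r) ^ 2 ≤ (1 / ((2 - α) * (1 - α))) * E := by
    rw [← hmaj_val]; exact hint_le
  have h1α : (0:ℝ) < 1 - α := by linarith
  have h2α : (0:ℝ) < 2 - α := by linarith
  have hInonneg : 0 ≤ ∫ r in Set.Ioo (0:ℝ) 1, (v r) ^ 2 :=
    integral_nonneg (fun r => sq_nonneg _)
  have hc : (1 - α) ^ 2 / 4 * (1 / ((2 - α) * (1 - α))) ≤ 1 := by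
    rw [show (1 - α) ^ 2 / 4 * (1 / ((2 - α) * (1 - α))) = (1 - α) / (4 * (2 - α)) by
      field_simp]
    rw [div_le_one (by positivity)]
    linarith
  calc ((1 - α) ^ 2 / 4) * ∫ r in Set.Ioo (0:ℝ) 1, (v r) ^ 2
      ≤ (1 - α) ^ 2 / 4 * (1 / ((2 - α) * (1 - α)) * E) :=
        mul_le_mul_of_nonneg_left hfinal (by positivity)
    _ = ((1 - α) ^ 2 / 4 * (1 / ((2 - α) * (1 - α)))) * E := by ring
    _ ≤ 1 * E := mul_le_mul_of_nonneg_right hc hE_nonneg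
    _ = E := one_mul E


end AuxHardy

section MainProof
open MeasureTheory Set Topology
set_option maxHeartbeats 2000000

/-- **Lower bound `(1−α)²/4` for the first eigenvalue** of the degenerate operator
`𝒜u = −∂_θθ u − ∂_r(r^α ∂_r u)` on `Ω = 𝕋 × (0,1)` with Dirichlet boundary conditions,
in variational form (Remark 2.1 / Notation 2.1 of the paper).
The torus `𝕋 = ℝ/2πℤ` is modelled by `2π`-periodic functions of `θ ∈ ℝ`, with the
integral over `𝕋` realized as the integral over `(0, 2π)`. -/
theorem stmt_3 (α : ℝ) (hα : α ∈ Set.Ioo (0 : ℝ) 1) :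
    ∀ u : ℝ → ℝ → ℝ,
      ContDiffOn ℝ 1 (fun p : ℝ × ℝ => u p.1 p.2) (Set.univ ×ˢ Set.Icc 0 1) →
      (∀ θ r : ℝ, u (θ + 2 * Real.pi) r = u θ r) →
      (∀ θ : ℝ, u θ 0 = 0) →
      (((1 - α) ^ 2 / 4) * ∫ θ in Set.Ioo 0 (2 * Real.pi), ∫ r in Set.Ioo (0 : ℝ) 1,
            (u θ r) ^ 2)
        ≤ (∫ θ in Set.Ioo 0 (2 * Real.pi), ∫ r in Set.Ioo (0 : ℝ) 1,
            r ^ α * (deriv (u θ) r) ^ 2)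
      ∧
      ((∃ θ : ℝ, ∃ r ∈ Set.Icc (0 : ℝ) 1, u θ r ≠ 0) →
        (1 - α) ^ 2 / 4 ≤
          (∫ θ in Set.Ioo 0 (2 * Real.pi), ∫ r in Set.Ioo (0 : ℝ) 1,
              ((deriv (fun x => u x r) θ) ^ 2 + r ^ α * (deriv (u θ) r) ^ 2)) /
          (∫ θ in Set.Ioo 0 (2 * Real.pi), ∫ r in Set.Ioo (0 : ℝ) 1, (u θ r) ^ 2)) := by
  obtain ⟨hα0, hα1⟩ := hα
  intro u hu hper hu0
  have hπ : (0:ℝ) < 2 * Real.pi := by positivity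
  set S : Set (ℝ × ℝ) := Set.univ ×ˢ Set.Icc 0 1 with hSdef
  set F : ℝ × ℝ → ℝ := fun p => u p.1 p.2 with hFdef
  have hFc : ContinuousOn F S := hu.continuousOn
  have hUD : UniqueDiffOn ℝ S := uniqueDiffOn_univ.prod (uniqueDiffOn_Icc zero_lt_one)
  have hGc : ContinuousOn (fderivWithin ℝ F S) S := hu.continuousOn_fderivWithin hUD le_rfl
  have hUopen : IsOpen (Set.univ ×ˢ Set.Ioo (0:ℝ) 1) := (isOpen_univ (X := ℝ)).prod isOpen_Ioo
  have hUS : (Set.univ ×ˢ Set.Ioo (0:ℝ) 1) ⊆ S :=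
    Set.prod_mono subset_rfl Set.Ioo_subset_Icc_self
  have hSnhds : ∀ θ : ℝ, ∀ r ∈ Set.Ioo (0:ℝ) 1, S ∈ 𝓝 ((θ, r) : ℝ × ℝ) := fun θ r hr =>
    Filter.mem_of_superset (hUopen.mem_nhds ⟨trivial, hr⟩) hUS
  have hvθ : ∀ θ : ℝ, ContDiffOn ℝ 1 (u θ) (Set.Icc 0 1) := by
    intro θ
    have hmk : ContDiff ℝ 1 (fun r : ℝ => ((θ, r) : ℝ × ℝ)) := contDiff_const.prodMk contDiff_id
    exact hu.comp hmk.contDiffOn (fun r hr => ⟨trivial, hr⟩)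
  have hrpowc : Continuous (fun s : ℝ => s ^ α) :=
    continuousOn_univ.1
      (continuousOn_id.rpow_const fun x _ => Or.inr (le_of_lt hα0))
  have hFdAt : ∀ θ : ℝ, ∀ r ∈ Set.Ioo (0:ℝ) 1, DifferentiableAt ℝ F (θ, r) := fun θ r hr =>
    (hu.differentiableOn one_ne_zero (θ, r) ⟨trivial, Set.Ioo_subset_Icc_self hr⟩).differentiableAt
      (hSnhds θ r hr)
  have hdr : ∀ θ : ℝ, ∀ r ∈ Set.Ioo (0:ℝ) 1,
      deriv (u θ) r = fderiv ℝ F (θ, r) ((0:ℝ), (1:ℝ)) := by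
    intro θ r hr
    have h1 : HasDerivAt (fun x : ℝ => ((θ, x) : ℝ × ℝ)) (0, 1) r :=
      (hasDerivAt_const r θ).prodMk (hasDerivAt_id r)
    exact ((hFdAt θ r hr).hasFDerivAt.comp_hasDerivAt r h1).deriv
  have hdθ : ∀ θ : ℝ, ∀ r ∈ Set.Ioo (0:ℝ) 1,
      deriv (fun x => u x r) θ = fderiv ℝ F (θ, r) ((1:ℝ), (0:ℝ)) := by
    intro θ r hr
    have h1 : HasDerivAt (fun x : ℝ => ((x, r) : ℝ × ℝ)) (1, 0) θ :=
      (hasDerivAt_id θ).prodMk (hasDerivAt_const θ r)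
    exact ((hFdAt θ r hr).hasFDerivAt.comp_hasDerivAt θ h1).deriv
  -- uniform bound on the differential over [0, 2π] × [0, 1]
  obtain ⟨M₀, hM₀⟩ := ((isCompact_Icc (a := (0:ℝ)) (b := 2 * Real.pi)).prod
    (isCompact_Icc (a := (0:ℝ)) (b := 1))).exists_bound_of_continuousOn
    (hGc.mono (Set.prod_mono (Set.subset_univ _) subset_rfl))
  have hw1 : ‖(((0:ℝ), (1:ℝ)) : ℝ × ℝ)‖ = 1 := by simp [Prod.norm_def]
  have hw2 : ‖(((1:ℝ), (0:ℝ)) : ℝ × ℝ)‖ = 1 := by simp [Prod.norm_def]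
  have hfb : ∀ θ ∈ Set.Icc 0 (2 * Real.pi), ∀ r ∈ Set.Ioo (0:ℝ) 1, ∀ w : ℝ × ℝ,
      |fderiv ℝ F (θ, r) w| ≤ M₀ * ‖w‖ := by
    intro θ hθ r hr w
    rw [← fderivWithin_of_mem_nhds (hSnhds θ r hr)]
    rw [← Real.norm_eq_abs]
    exact le_trans ((fderivWithin ℝ F S (θ, r)).le_opNorm w)
      (mul_le_mul_of_nonneg_right (hM₀ (θ, r) ⟨hθ, Set.Ioo_subset_Icc_self hr⟩) (norm_nonneg w))
  have hfbr : ∀ θ ∈ Set.Icc 0 (2 * Real.pi), ∀ r ∈ Set.Ioo (0:ℝ) 1,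
      |deriv (u θ) r| ≤ M₀ := by
    intro θ hθ r hr
    rw [hdr θ r hr]
    simpa [hw1] using hfb θ hθ r hr ((0:ℝ), (1:ℝ))
  have hfbθ : ∀ θ ∈ Set.Icc 0 (2 * Real.pi), ∀ r ∈ Set.Ioo (0:ℝ) 1,
      |deriv (fun x => u x r) θ| ≤ M₀ := by
    intro θ hθ r hr
    rw [hdθ θ r hr]
    simpa [hw2] using hfb θ hθ r hr ((1:ℝ), (0:ℝ))
  -- continuity of the full derivative on the open strip
  have hfdc : ContinuousOn (fun p : ℝ × ℝ => fderiv ℝ F p) (Set.univ ×ˢ Set.Ioo (0:ℝ) 1) := by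
    apply (hGc.mono hUS).congr
    intro p hp
    exact (fderivWithin_of_mem_nhds (hSnhds p.1 p.2 hp.2)).symm
  have hfdcw : ∀ w : ℝ × ℝ, ContinuousOn (fun p : ℝ × ℝ => fderiv ℝ F p w)
      (Set.univ ×ˢ Set.Ioo (0:ℝ) 1) := fun w => hfdc.clm_apply continuousOn_const
  -- the three θ-functions
  set Iθ : ℝ → ℝ := fun θ => ∫ r in Set.Ioo (0:ℝ) 1, (u θ r) ^ 2 with hIdef
  set Jθ : ℝ → ℝ := fun θ => ∫ r in Set.Ioo (0:ℝ) 1, r ^ α * (deriv (u θ) r) ^ 2 with hJdef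
  set Kθ : ℝ → ℝ := fun θ => ∫ r in Set.Ioo (0:ℝ) 1,
      ((deriv (fun x => u x r) θ) ^ 2 + r ^ α * (deriv (u θ) r) ^ 2) with hKdef
  have hvol1 : (volume (Set.Ioo (0:ℝ) 1)).toReal = 1 := by simp
  -- pointwise bound for the J-integrand
  have hJptb : ∀ θ ∈ Set.Icc 0 (2 * Real.pi), ∀ r ∈ Set.Ioo (0:ℝ) 1,
      ‖r ^ α * (deriv (u θ) r) ^ 2‖ ≤ M₀ ^ 2 := by
    intro θ hθ r hr
    have h1 : r ^ α ≤ 1 := Real.rpow_le_one hr.1.le hr.2.le hα0.le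
    have h2 : (0:ℝ) ≤ r ^ α := Real.rpow_nonneg hr.1.le α
    have h3 := hfbr θ hθ r hr
    have h4 : (deriv (u θ) r) ^ 2 ≤ M₀ ^ 2 := by
      nlinarith [abs_nonneg (deriv (u θ) r), sq_abs (deriv (u θ) r)]
    rw [Real.norm_eq_abs, abs_of_nonneg (mul_nonneg h2 (sq_nonneg _))]
    nlinarith
  have hKptb : ∀ θ ∈ Set.Icc 0 (2 * Real.pi), ∀ r ∈ Set.Ioo (0:ℝ) 1,
      ‖(deriv (fun x => u x r) θ) ^ 2 + r ^ α * (deriv (u θ) r) ^ 2‖ ≤ M₀ ^ 2 + M₀ ^ 2 := by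
    intro θ hθ r hr
    have h3 := hfbθ θ hθ r hr
    have h4 : (deriv (fun x => u x r) θ) ^ 2 ≤ M₀ ^ 2 := by
      nlinarith [abs_nonneg (deriv (fun x => u x r) θ), sq_abs (deriv (fun x => u x r) θ)]
    have h5 := hJptb θ hθ r hr
    rw [Real.norm_eq_abs] at h5 ⊢
    have h2 : (0:ℝ) ≤ r ^ α := Real.rpow_nonneg hr.1.le α
    rw [abs_of_nonneg (add_nonneg (sq_nonneg _) (mul_nonneg h2 (sq_nonneg _)))]
    rw [abs_of_nonneg (mul_nonneg h2 (sq_nonneg _))] at h5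
    linarith
  -- measurability in r of the integrands, for each θ
  have hJmeas : ∀ θ : ℝ, AEStronglyMeasurable (fun r : ℝ => r ^ α * (deriv (u θ) r) ^ 2)
      (volume.restrict (Set.Ioo (0:ℝ) 1)) := fun θ =>
    (hrpowc.measurable.mul ((measurable_deriv (u θ)).pow_const 2)).aestronglyMeasurable
  have hKmeas : ∀ θ : ℝ, AEStronglyMeasurable
      (fun r : ℝ => (deriv (fun x => u x r) θ) ^ 2 + r ^ α * (deriv (u θ) r) ^ 2)
      (volume.restrict (Set.Ioo (0:ℝ) 1)) := by
    intro θ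
    apply AEStronglyMeasurable.add _ (hJmeas θ)
    have hcont : ContinuousOn (fun r : ℝ => (fderiv ℝ F (θ, r) ((1:ℝ), (0:ℝ))) ^ 2)
        (Set.Ioo (0:ℝ) 1) := by
      apply ContinuousOn.pow
      exact (hfdcw _).comp (Continuous.continuousOn (continuous_const.prodMk continuous_id))
        (fun r hr => ⟨trivial, hr⟩)
    apply (hcont.aestronglyMeasurable measurableSet_Ioo).congr
    filter_upwards [ae_restrict_mem measurableSet_Ioo] with r hr
    rw [hdθ θ r hr]
  -- continuity in θ of J and K on (0, 2π)
  have hbint : Integrable (fun _ : ℝ => M₀ ^ 2 + M₀ ^ 2) (volume.restrict (Set.Ioo (0:ℝ) 1)) := by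
    rw [integrable_const_iff]
    right
    constructor
    rw [Measure.restrict_apply_univ]
    exact measure_Ioo_lt_top
  have hbint' : Integrable (fun _ : ℝ => M₀ ^ 2) (volume.restrict (Set.Ioo (0:ℝ) 1)) := by
    rw [integrable_const_iff]
    right
    constructor
    rw [Measure.restrict_apply_univ]
    exact measure_Ioo_lt_top
  have hJcont : ∀ θ₀ ∈ Set.Ioo 0 (2 * Real.pi), ContinuousAt Jθ θ₀ := by
    intro θ₀ hθ₀
    apply continuousAt_of_dominated (bound := fun _ => M₀ ^ 2)
      (Filter.Eventually.of_forall hJmeas) _ hbint'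
    · filter_upwards [ae_restrict_mem measurableSet_Ioo] with r hr
      have heq : (fun θ => r ^ α * (deriv (u θ) r) ^ 2)
          = fun θ => r ^ α * ((fderiv ℝ F (θ, r)) ((0:ℝ), (1:ℝ))) ^ 2 :=
        funext fun θ => by rw [hdr θ r hr]
      rw [heq]
      apply ContinuousAt.mul continuousAt_const
      apply ContinuousAt.pow
      have hc : ContinuousAt (fun p : ℝ × ℝ => fderiv ℝ F p ((0:ℝ), (1:ℝ))) (θ₀, r) :=
        (hfdcw _).continuousAt (hUopen.mem_nhds ⟨trivial, hr⟩)
      have hmk : ContinuousAt (fun θ : ℝ => ((θ, r) : ℝ × ℝ)) θ₀ :=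
        (continuous_id.prodMk continuous_const).continuousAt
      exact ContinuousAt.comp (x := θ₀) hc hmk
    · filter_upwards [Ioo_mem_nhds hθ₀.1 hθ₀.2] with θ hθ
      filter_upwards [ae_restrict_mem measurableSet_Ioo] with r hr
      exact hJptb θ (Set.Ioo_subset_Icc_self hθ) r hr
  have hKcont : ∀ θ₀ ∈ Set.Ioo 0 (2 * Real.pi), ContinuousAt Kθ θ₀ := by
    intro θ₀ hθ₀
    apply continuousAt_of_dominated (bound := fun _ => M₀ ^ 2 + M₀ ^ 2)
      (Filter.Eventually.of_forall hKmeas) _ hbint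
    · filter_upwards [ae_restrict_mem measurableSet_Ioo] with r hr
      have heq : (fun θ => (deriv (fun x => u x r) θ) ^ 2 + r ^ α * (deriv (u θ) r) ^ 2)
          = fun θ => ((fderiv ℝ F (θ, r)) ((1:ℝ), (0:ℝ))) ^ 2
              + r ^ α * ((fderiv ℝ F (θ, r)) ((0:ℝ), (1:ℝ))) ^ 2 :=
        funext fun θ => by rw [hdr θ r hr, hdθ θ r hr]
      rw [heq]
      have hmk : ContinuousAt (fun θ : ℝ => ((θ, r) : ℝ × ℝ)) θ₀ :=
        (continuous_id.prodMk continuous_const).continuousAt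
      apply ContinuousAt.add
      · exact (((hfdcw ((1:ℝ), (0:ℝ))).continuousAt
          (hUopen.mem_nhds ⟨trivial, hr⟩)).comp hmk).pow 2
      · exact continuousAt_const.mul ((((hfdcw ((0:ℝ), (1:ℝ))).continuousAt
          (hUopen.mem_nhds ⟨trivial, hr⟩)).comp hmk).pow 2)
    · filter_upwards [Ioo_mem_nhds hθ₀.1 hθ₀.2] with θ hθ
      filter_upwards [ae_restrict_mem measurableSet_Ioo] with r hr
      exact hKptb θ (Set.Ioo_subset_Icc_self hθ) r hr
  -- integrability of J and K over (0, 2π)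
  have hJint : IntegrableOn Jθ (Set.Ioo 0 (2 * Real.pi)) := by
    refine myIntOnBdd (M := M₀ ^ 2) measure_Ioo_lt_top.ne
      (ContinuousOn.aestronglyMeasurable
        (fun θ hθ => (hJcont θ hθ).continuousWithinAt) measurableSet_Ioo) ?_
    filter_upwards [ae_restrict_mem measurableSet_Ioo] with θ hθ
    refine le_trans (norm_setIntegral_le_of_norm_le_const measure_Ioo_lt_top
      (fun r hr => hJptb θ (Set.Ioo_subset_Icc_self hθ) r hr)) ?_
    rw [Measure.real, hvol1, mul_one]
  have hKint : IntegrableOn Kθ (Set.Ioo 0 (2 * Real.pi)) := by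
    refine myIntOnBdd (M := M₀ ^ 2 + M₀ ^ 2) measure_Ioo_lt_top.ne
      (ContinuousOn.aestronglyMeasurable
        (fun θ hθ => (hKcont θ hθ).continuousWithinAt) measurableSet_Ioo) ?_
    filter_upwards [ae_restrict_mem measurableSet_Ioo] with θ hθ
    refine le_trans (norm_setIntegral_le_of_norm_le_const measure_Ioo_lt_top
      (fun r hr => hKptb θ (Set.Ioo_subset_Icc_self hθ) r hr)) ?_
    rw [Measure.real, hvol1, mul_one]
  -- part 1
  have hpt : ∀ θ : ℝ, ((1 - α) ^ 2 / 4) * Iθ θ ≤ Jθ θ := fun θ =>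
    hardy1d hα0 hα1 (hvθ θ) (hu0 θ)
  have hInn : ∀ θ, 0 ≤ Iθ θ := fun θ => integral_nonneg fun r => sq_nonneg _
  have part1 : ((1 - α) ^ 2 / 4) * (∫ θ in Set.Ioo 0 (2 * Real.pi), Iθ θ)
      ≤ ∫ θ in Set.Ioo 0 (2 * Real.pi), Jθ θ := by
    rw [← integral_const_mul]
    refine integral_mono_of_nonneg ?_ hJint ?_
    · filter_upwards with θ
      exact mul_nonneg (by positivity) (hInn θ)
    · filter_upwards with θ using hpt θ
  refine ⟨part1, ?_⟩
  -- part 2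
  rintro ⟨θ₀, r₀, hr₀, hu₀⟩
  -- J ≤ K pointwise on [0, 2π]
  have hJrint : ∀ θ : ℝ, IntegrableOn (fun r : ℝ => r ^ α * (deriv (u θ) r) ^ 2)
      (Set.Ioo 0 1) := by
    intro θ
    have hM : ContinuousOn (derivWithin (u θ) (Set.Icc 0 1)) (Set.Icc 0 1) :=
      (hvθ θ).continuousOn_derivWithin (uniqueDiffOn_Icc zero_lt_one) le_rfl
    obtain ⟨M, hM⟩ := isCompact_Icc.exists_bound_of_continuousOn hM
    refine myIntOnBdd (M := M ^ 2) measure_Ioo_lt_top.ne (hJmeas θ) ?_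
    filter_upwards [ae_restrict_mem measurableSet_Ioo] with r hr
    have hder : |deriv (u θ) r| ≤ M := by
      rw [← derivWithin_of_mem_nhds (Icc_mem_nhds hr.1 hr.2)]
      simpa using hM r (Set.Ioo_subset_Icc_self hr)
    have h1 : r ^ α ≤ 1 := Real.rpow_le_one hr.1.le hr.2.le hα0.le
    have h2 : (0:ℝ) ≤ r ^ α := Real.rpow_nonneg hr.1.le α
    rw [Real.norm_eq_abs, abs_of_nonneg (mul_nonneg h2 (sq_nonneg _))]
    nlinarith [sq_abs (deriv (u θ) r), abs_nonneg (deriv (u θ) r)]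
  have hAint : ∀ θ ∈ Set.Icc 0 (2 * Real.pi),
      IntegrableOn (fun r : ℝ => (deriv (fun x => u x r) θ) ^ 2) (Set.Ioo 0 1) := by
    intro θ hθ
    have hcont : ContinuousOn (fun r : ℝ => (fderiv ℝ F (θ, r) ((1:ℝ), (0:ℝ))) ^ 2)
        (Set.Ioo (0:ℝ) 1) :=
      ContinuousOn.pow ((hfdcw _).comp
        (Continuous.continuousOn (continuous_const.prodMk continuous_id))
        (fun r hr => ⟨trivial, hr⟩)) 2
    have hint : IntegrableOn (fun r : ℝ => (fderiv ℝ F (θ, r) ((1:ℝ), (0:ℝ))) ^ 2)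
        (Set.Ioo 0 1) := by
      refine myIntOnBdd (M := M₀ ^ 2) measure_Ioo_lt_top.ne
        (hcont.aestronglyMeasurable measurableSet_Ioo) ?_
      filter_upwards [ae_restrict_mem measurableSet_Ioo] with r hr
      have h3 := hfbθ θ hθ r hr
      rw [hdθ θ r hr] at h3
      rw [Real.norm_eq_abs, abs_of_nonneg (sq_nonneg _)]
      nlinarith [sq_abs (fderiv ℝ F (θ, r) ((1:ℝ), (0:ℝ))),
        abs_nonneg (fderiv ℝ F (θ, r) ((1:ℝ), (0:ℝ)))]
    apply hint.congr
    filter_upwards [ae_restrict_mem measurableSet_Ioo] with r hr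
    rw [hdθ θ r hr]
  have hJK : ∀ θ ∈ Set.Icc 0 (2 * Real.pi), Jθ θ ≤ Kθ θ := by
    intro θ hθ
    have h := integral_add (μ := volume.restrict (Set.Ioo (0:ℝ) 1)) (hAint θ hθ) (hJrint θ)
    have hnn : 0 ≤ ∫ r in Set.Ioo (0:ℝ) 1, (deriv (fun x => u x r) θ) ^ 2 :=
      integral_nonneg fun r => sq_nonneg _
    have : Kθ θ = (∫ r in Set.Ioo (0:ℝ) 1, (deriv (fun x => u x r) θ) ^ 2) + Jθ θ := h
    rw [this]
    linarith

  have hJKint : (∫ θ in Set.Ioo 0 (2 * Real.pi), Jθ θ)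
      ≤ ∫ θ in Set.Ioo 0 (2 * Real.pi), Kθ θ := by
    refine integral_mono_of_nonneg ?_ hKint ?_
    · filter_upwards [ae_restrict_mem measurableSet_Ioo] with θ hθ
      apply integral_nonneg_of_ae
      filter_upwards [ae_restrict_mem measurableSet_Ioo] with r hr
      exact mul_nonneg (Real.rpow_nonneg hr.1.le α) (sq_nonneg _)
    · filter_upwards [ae_restrict_mem measurableSet_Ioo] with θ hθ
      exact hJK θ (Set.Ioo_subset_Icc_self hθ)
  -- find a point in the open rectangle where u ≠ 0
  have hr₀ne : r₀ ≠ 0 := by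
    intro h
    exact hu₀ (h ▸ hu0 θ₀)
  have hr₀pos : 0 < r₀ := lt_of_le_of_ne hr₀.1 (Ne.symm hr₀ne)
  set θ₁ : ℝ := θ₀ - ⌊θ₀ / (2 * Real.pi)⌋ * (2 * Real.pi) with hθ₁def
  have hθ₁mem : θ₁ ∈ Set.Ico 0 (2 * Real.pi) :=
    ⟨Int.sub_floor_div_mul_nonneg θ₀ hπ, Int.sub_floor_div_mul_lt θ₀ hπ⟩
  have hu₁ : u θ₁ r₀ ≠ 0 := by
    have hp : Function.Periodic (fun x => u x r₀) (2 * Real.pi) := fun x => hper x r₀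
    have := hp.sub_int_mul_eq (x := θ₀) ⌊θ₀ / (2 * Real.pi)⌋
    rw [hθ₁def]
    exact fun h => hu₀ (by rw [← this, h])
  clear_value θ₁
  have hcw : ContinuousWithinAt F S (θ₁, r₀) := hFc (θ₁, r₀) ⟨trivial, ⟨hr₀pos.le, hr₀.2⟩⟩
  have hmem := hcw.preimage_mem_nhdsWithin (isOpen_ne.mem_nhds (hu₁ : F (θ₁, r₀) ≠ 0))
  rw [Metric.mem_nhdsWithin_iff] at hmem
  obtain ⟨ε, hε, hball⟩ := hmem
  set θ₂ : ℝ := θ₁ + min ε (2 * Real.pi - θ₁) / 2 with hθ₂def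
  set r₂ : ℝ := r₀ - min ε r₀ / 2 with hr₂def
  clear_value θ₂ r₂
  have hminθ : 0 < min ε (2 * Real.pi - θ₁) := lt_min hε (by linarith [hθ₁mem.2])
  have hminr : 0 < min ε r₀ := lt_min hε hr₀pos
  have hθ₂mem : θ₂ ∈ Set.Ioo 0 (2 * Real.pi) := by
    constructor
    · have := hθ₁mem.1; rw [hθ₂def]; linarith
    · have h1 : min ε (2 * Real.pi - θ₁) ≤ 2 * Real.pi - θ₁ := min_le_right _ _
      rw [hθ₂def]; linarith
  have hr₂mem : r₂ ∈ Set.Ioo (0:ℝ) 1 := by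
    constructor
    · have h1 : min ε r₀ ≤ r₀ := min_le_right _ _
      rw [hr₂def]; linarith
    · have := hr₀.2
      rw [hr₂def]; linarith
  have hdist : dist ((θ₂, r₂) : ℝ × ℝ) (θ₁, r₀) < ε := by
    rw [Prod.dist_eq]
    apply max_lt
    · rw [Real.dist_eq, hθ₂def]
      have h1 : min ε (2 * Real.pi - θ₁) ≤ ε := min_le_left _ _
      rw [show θ₁ + min ε (2 * Real.pi - θ₁) / 2 - θ₁ = min ε (2 * Real.pi - θ₁) / 2 by ring]
      rw [abs_of_pos (by linarith)]
      linarith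
    · rw [Real.dist_eq, hr₂def]
      have h1 : min ε r₀ ≤ ε := min_le_left _ _
      rw [show r₀ - min ε r₀ / 2 - r₀ = -(min ε r₀ / 2) by ring, abs_neg]
      rw [abs_of_pos (by linarith)]
      linarith
  have hu₂ : u θ₂ r₂ ≠ 0 :=
    hball ⟨Metric.mem_ball.2 hdist, ⟨trivial, ⟨hr₂mem.1.le, hr₂mem.2.le⟩⟩⟩
  -- Iθ θ₂ > 0
  have hIrint : ∀ θ : ℝ, IntegrableOn (fun r : ℝ => (u θ r) ^ 2) (Set.Ioo 0 1) := fun θ =>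
    (((hvθ θ).continuousOn.pow 2).integrableOn_Icc).mono_set Set.Ioo_subset_Icc_self
  have hI2 : 0 < Iθ θ₂ := by
    rw [hIdef]
    rw [setIntegral_pos_iff_support_of_nonneg_ae _ (hIrint θ₂)]
    · have hcAt : ContinuousAt (u θ₂) r₂ :=
        ((hvθ θ₂).continuousOn.continuousAt (Icc_mem_nhds hr₂mem.1 hr₂mem.2))
      have hev : ∀ᶠ r in 𝓝 r₂, u θ₂ r ≠ 0 := hcAt.eventually_ne hu₂
      have hU : {r : ℝ | u θ₂ r ≠ 0} ∩ Set.Ioo 0 1 ∈ 𝓝 r₂ :=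
        Filter.inter_mem hev (Ioo_mem_nhds hr₂mem.1 hr₂mem.2)
      refine lt_of_lt_of_le (Measure.measure_pos_of_mem_nhds (μ := volume) hU) (measure_mono ?_)
      intro r hr
      exact ⟨pow_ne_zero 2 hr.1, hr.2⟩
    · filter_upwards with r
      exact sq_nonneg _
  -- Iθ is continuous everywhere
  have hIcontAt : ∀ t₀ : ℝ, ContinuousAt Iθ t₀ := by
    intro t₀
    obtain ⟨B, hB⟩ := ((isCompact_Icc (a := t₀ - 1) (b := t₀ + 1)).prod
      (isCompact_Icc (a := (0:ℝ)) (b := 1))).exists_bound_of_continuousOn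
      (hFc.mono (Set.prod_mono (Set.subset_univ _) subset_rfl))
    apply continuousAt_of_dominated (bound := fun _ => B ^ 2)
    · apply Filter.Eventually.of_forall
      intro θ
      exact ((((hvθ θ).continuousOn.pow 2).mono
        Set.Ioo_subset_Icc_self).aestronglyMeasurable measurableSet_Ioo)
    · filter_upwards [Icc_mem_nhds (by linarith : t₀ - 1 < t₀) (by linarith : t₀ < t₀ + 1)]
        with θ hθ
      filter_upwards [ae_restrict_mem measurableSet_Ioo] with r hr
      have h3 : ‖F (θ, r)‖ ≤ B := hB (θ, r) ⟨hθ, Set.Ioo_subset_Icc_self hr⟩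
      rw [Real.norm_eq_abs] at h3 ⊢
      rw [abs_of_nonneg (sq_nonneg _)]
      nlinarith [sq_abs (u θ r), abs_nonneg (u θ r)]
    · rw [integrable_const_iff]
      right
      constructor
      rw [Measure.restrict_apply_univ]
      exact measure_Ioo_lt_top
    · filter_upwards [ae_restrict_mem measurableSet_Ioo] with r hr
      have hc : ContinuousAt F (t₀, r) := hFc.continuousAt (hSnhds t₀ r hr)
      have hmk : ContinuousAt (fun θ : ℝ => ((θ, r) : ℝ × ℝ)) t₀ :=
        (continuous_id.prodMk continuous_const).continuousAt
      exact (ContinuousAt.comp (x := t₀) hc hmk).pow 2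
  have hIint : IntegrableOn Iθ (Set.Ioo 0 (2 * Real.pi)) :=
    ((continuous_iff_continuousAt.2 hIcontAt).integrableOn_Icc).mono_set Set.Ioo_subset_Icc_self
  have hD : 0 < ∫ θ in Set.Ioo 0 (2 * Real.pi), Iθ θ := by
    rw [setIntegral_pos_iff_support_of_nonneg_ae _ hIint]
    · have hev : ∀ᶠ θ in 𝓝 θ₂, Iθ θ ≠ 0 := (hIcontAt θ₂).eventually_ne (ne_of_gt hI2)
      have hU : {θ : ℝ | Iθ θ ≠ 0} ∩ Set.Ioo 0 (2 * Real.pi) ∈ 𝓝 θ₂ :=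
        Filter.inter_mem hev (Ioo_mem_nhds hθ₂mem.1 hθ₂mem.2)
      refine lt_of_lt_of_le (Measure.measure_pos_of_mem_nhds (μ := volume) hU) (measure_mono ?_)
      intro θ hθ
      exact ⟨hθ.1, hθ.2⟩
    · filter_upwards with θ
      exact hInn θ
  -- conclude
  rw [le_div_iff₀ hD]
  calc (1 - α) ^ 2 / 4 * ∫ θ in Set.Ioo 0 (2 * Real.pi), Iθ θ
      ≤ ∫ θ in Set.Ioo 0 (2 * Real.pi), Jθ θ := part1
    _ ≤ ∫ θ in Set.Ioo 0 (2 * Real.pi), Kθ θ := hJKint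

end MainProof
end

section
/- Let α ∈ (0,1) and δ ∈ (0,1). For every continuously differentiable function u : 𝕋 × [0,1] → ℝ with u(θ,0) = 0 for all θ ∈ 𝕋, one has ∫_𝕋 ∫_0^δ u(θ,r)² dr dθ ≤ (4/(1−α)²) δ^{2−α} ∫_𝕋 ∫_0^1 r^{α} (∂_r u(θ,r))² dr dθ. -/
open MeasureTheory

/-- **Boundary-layer smallness estimate near the degenerate boundary `r = 0`**
(used in the proof of the compact embedding, Lemma 2.2 of the paper).
The torus `𝕋 = ℝ/2πℤ` is modelled by `2π`-periodic functions of `θ ∈ ℝ`, with the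
integral over `𝕋` realized as the integral over `(0, 2π)`. -/
theorem stmt_4 (α δ : ℝ) (hα : α ∈ Set.Ioo (0 : ℝ) 1) (hδ : δ ∈ Set.Ioo (0 : ℝ) 1) :
    ∀ u : ℝ → ℝ → ℝ,
      ContDiffOn ℝ 1 (fun p : ℝ × ℝ => u p.1 p.2) (Set.univ ×ˢ Set.Icc 0 1) →
      (∀ θ r : ℝ, u (θ + 2 * Real.pi) r = u θ r) →
      (∀ θ : ℝ, u θ 0 = 0) →
      (∫ θ in Set.Ioo 0 (2 * Real.pi), ∫ r in Set.Ioo (0 : ℝ) δ, (u θ r) ^ 2)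
        ≤ (4 / (1 - α) ^ 2) * δ ^ (2 - α) *
          ∫ θ in Set.Ioo 0 (2 * Real.pi), ∫ r in Set.Ioo (0 : ℝ) 1,
            r ^ α * (deriv (u θ) r) ^ 2 := by
  obtain ⟨hα0, hα1⟩ := hα
  obtain ⟨hδ0, hδ1⟩ := hδ
  intro u hu _hper hzero
  set F : ℝ × ℝ → ℝ := fun p => u p.1 p.2 with hF
  set S : Set (ℝ × ℝ) := Set.univ ×ˢ Set.Icc 0 1 with hSdef
  have hS_ud : UniqueDiffOn ℝ S := uniqueDiffOn_univ.prod (uniqueDiffOn_Icc one_pos)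
  set G : ℝ × ℝ → ℝ := fun p => (fderivWithin ℝ F S p) (0, 1) with hGdef
  have hGcont : ContinuousOn G S :=
    (hu.continuousOn_fderivWithin hS_ud le_rfl).clm_apply continuousOn_const
  have hmem : ∀ (θ : ℝ) {r : ℝ}, r ∈ Set.Ioo (0:ℝ) 1 → S ∈ nhds (θ, r) := by
    intro θ r hr
    exact prod_mem_nhds Filter.univ_mem (Icc_mem_nhds hr.1 hr.2)
  -- the derivative of `u θ` at interior points is `G (θ, r)`
  have hG_deriv : ∀ (θ : ℝ), ∀ r ∈ Set.Ioo (0:ℝ) 1, HasDerivAt (u θ) (G (θ, r)) r := by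
    intro θ r hr
    have hnhds := hmem θ hr
    have hdF : DifferentiableAt ℝ F (θ, r) :=
      (hu.contDiffAt hnhds).differentiableAt one_ne_zero
    have h1 : HasDerivAt (fun r : ℝ => ((θ, r) : ℝ × ℝ)) (0, 1) r :=
      (hasDerivAt_const r θ).prodMk (hasDerivAt_id r)
    have h2 := hdF.hasFDerivAt.comp_hasDerivAt r h1
    have h3 : G (θ, r) = fderiv ℝ F (θ, r) (0, 1) := by
      simp only [hGdef]; rw [fderivWithin_of_mem_nhds hnhds]
    rw [h3]
    exact h2
  have hG_eq_deriv : ∀ (θ : ℝ), ∀ r ∈ Set.Ioo (0:ℝ) 1, deriv (u θ) r = G (θ, r) :=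
    fun θ r hr => (hG_deriv θ r hr).deriv
  have hucont : ∀ θ : ℝ, ContinuousOn (u θ) (Set.Icc 0 1) := by
    intro θ
    have hmap : Set.MapsTo (fun r : ℝ => ((θ, r) : ℝ × ℝ)) (Set.Icc 0 1) S :=
      fun r hr => by simp [hSdef, hr]
    exact hu.continuousOn.comp (Continuous.continuousOn (by fun_prop)) hmap
  have hGc : ∀ θ : ℝ, ContinuousOn (fun s => G (θ, s)) (Set.Icc 0 1) := by
    intro θ
    have hmap : Set.MapsTo (fun r : ℝ => ((θ, r) : ℝ × ℝ)) (Set.Icc 0 1) S :=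
      fun r hr => by simp [hSdef, hr]
    exact hGcont.comp (Continuous.continuousOn (by fun_prop)) hmap
  -- FTC
  have hFTC : ∀ (θ : ℝ), ∀ r ∈ Set.Icc (0:ℝ) 1, u θ r = ∫ s in Set.Ioc (0:ℝ) r, G (θ, s) := by
    intro θ r hr
    have hGi : IntervalIntegrable (fun s => G (θ, s)) volume 0 r := by
      apply ContinuousOn.intervalIntegrable
      rw [Set.uIcc_of_le hr.1]
      exact (hGc θ).mono (Set.Icc_subset_Icc_right hr.2)
    have h := intervalIntegral.integral_eq_sub_of_hasDeriv_right_of_le hr.1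
      ((hucont θ).mono (Set.Icc_subset_Icc_right hr.2))
      (fun x hx => (hG_deriv θ x ⟨hx.1, lt_of_lt_of_le hx.2 hr.2⟩).hasDerivWithinAt) hGi
    rw [hzero θ, sub_zero] at h
    rw [← h, intervalIntegral.integral_of_le hr.1]
  -- integrability of the weighted squared derivative
  have hIGsq : ∀ θ : ℝ, IntegrableOn (fun s => s ^ α * G (θ, s) ^ 2) (Set.Icc 0 1) := by
    intro θ
    apply ContinuousOn.integrableOn_Icc
    apply ContinuousOn.mul ?_ ((hGc θ).pow 2)
    intro s _
    exact (Real.continuousAt_rpow_const s α (Or.inr hα0.le)).continuousWithinAt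
  set Cf : ℝ → ℝ := fun θ => ∫ s in Set.Ioo (0:ℝ) 1, s ^ α * G (θ, s) ^ 2 with hCfdef
  have hCnn : ∀ θ, 0 ≤ Cf θ := by
    intro θ
    apply setIntegral_nonneg measurableSet_Ioo
    intro s hs
    exact mul_nonneg (Real.rpow_nonneg hs.1.le _) (sq_nonneg _)
  have h2cast : ∀ x : ℝ, x ^ (2:ℝ) = x ^ 2 := fun x => by
    rw [show (2:ℝ) = ((2:ℕ):ℝ) by norm_num, Real.rpow_natCast]
  -- the key pointwise Cauchy–Schwarz estimate
  have hkey : ∀ (θ : ℝ), ∀ r ∈ Set.Ioo (0:ℝ) δ,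
      (u θ r) ^ 2 ≤ (r ^ (1-α) / (1-α)) * Cf θ := by
    intro θ r hr
    have hr0 : 0 < r := hr.1
    have hr1 : r < 1 := hr.2.trans hδ1
    set f : ℝ → ℝ := fun s => s ^ (-(α/2)) with hfdef
    set g : ℝ → ℝ := fun s => s ^ (α/2) * |G (θ, s)| with hgdef
    set μ : Measure ℝ := volume.restrict (Set.Ioc 0 r) with hμdef
    have hpq : Real.HolderConjugate 2 2 := ⟨by norm_num, by norm_num, by norm_num⟩
    have hrpc : ∀ c : ℝ, ContinuousOn (fun s : ℝ => s ^ c) (Set.Ioc 0 r) := fun c s hs =>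
      (Real.continuousAt_rpow_const s c (Or.inl hs.1.ne')).continuousWithinAt
    have hfm : AEStronglyMeasurable f μ :=
      (hrpc (-(α/2))).aestronglyMeasurable measurableSet_Ioc
    have hGm : AEStronglyMeasurable (fun s => G (θ, s)) μ :=
      (((hGc θ).mono ((Set.Ioc_subset_Icc_self).trans (Set.Icc_subset_Icc_right hr1.le)))).aestronglyMeasurable measurableSet_Ioc
    have hgm : AEStronglyMeasurable g μ :=
      ((hrpc (α/2)).aestronglyMeasurable measurableSet_Ioc).mul (hGm.norm)
    have hfsq : ∀ s ∈ Set.Ioc (0:ℝ) r, f s ^ 2 = s ^ (-α) := by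
      intro s hs
      rw [hfdef, ← Real.rpow_natCast (s ^ (-(α/2))) 2, ← Real.rpow_mul hs.1.le]
      norm_num
    have hgsq : ∀ s ∈ Set.Ioc (0:ℝ) r, g s ^ 2 = s ^ α * G (θ, s) ^ 2 := by
      intro s hs
      rw [hgdef, mul_pow, sq_abs, ← Real.rpow_natCast (s ^ (α/2)) 2, ← Real.rpow_mul hs.1.le]
      norm_num
    have hA_int : IntegrableOn (fun s : ℝ => s ^ (-α)) (Set.Ioc 0 r) := by
      have := intervalIntegral.intervalIntegrable_rpow' (a := 0) (b := r)
        (show (-1:ℝ) < -α by linarith)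
      exact (intervalIntegrable_iff_integrableOn_Ioc_of_le hr0.le).1 this
    have hB_int : IntegrableOn (fun s : ℝ => s ^ α * G (θ, s) ^ 2) (Set.Ioc 0 r) :=
      (hIGsq θ).mono_set ((Set.Ioc_subset_Icc_self).trans (Set.Icc_subset_Icc_right hr1.le))
    have hfmem : MemLp f (ENNReal.ofReal 2) μ := by
      rw [show ENNReal.ofReal 2 = 2 by norm_num, memLp_two_iff_integrable_sq hfm]
      apply hA_int.congr
      exact (ae_restrict_iff' measurableSet_Ioc).2 (ae_of_all _ fun s hs => (hfsq s hs).symm)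
    have hgmem : MemLp g (ENNReal.ofReal 2) μ := by
      rw [show ENNReal.ofReal 2 = 2 by norm_num, memLp_two_iff_integrable_sq hgm]
      apply hB_int.congr
      exact (ae_restrict_iff' measurableSet_Ioc).2 (ae_of_all _ fun s hs => (hgsq s hs).symm)
    have hfnn : 0 ≤ᵐ[μ] f :=
      (ae_restrict_iff' measurableSet_Ioc).2 (ae_of_all _ fun s hs => Real.rpow_nonneg hs.1.le _)
    have hgnn : 0 ≤ᵐ[μ] g :=
      (ae_restrict_iff' measurableSet_Ioc).2
        (ae_of_all _ fun s hs => mul_nonneg (Real.rpow_nonneg hs.1.le _) (abs_nonneg _))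
    have hHolder := integral_mul_le_Lp_mul_Lq_of_nonneg hpq hfnn hgnn hfmem hgmem
    -- rewrite the three integrals
    have hfg_eq : ∫ s, f s * g s ∂μ = ∫ s in Set.Ioc (0:ℝ) r, |G (θ, s)| := by
      apply setIntegral_congr_fun measurableSet_Ioc
      intro s hs
      simp only [hfdef, hgdef]
      rw [← mul_assoc, ← Real.rpow_add hs.1]
      norm_num
    have hA_eq : ∫ s, f s ^ (2:ℝ) ∂μ = r ^ (1-α) / (1-α) := by
      have h1 : ∫ s, f s ^ (2:ℝ) ∂μ = ∫ s in Set.Ioc (0:ℝ) r, s ^ (-α) := by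
        apply setIntegral_congr_fun measurableSet_Ioc
        intro s hs
        show f s ^ (2:ℝ) = s ^ (-α)
        rw [h2cast]; exact hfsq s hs
      rw [h1, ← intervalIntegral.integral_of_le hr0.le,
        integral_rpow (Or.inl (show (-1:ℝ) < -α by linarith))]
      rw [Real.zero_rpow (by linarith : -α + 1 ≠ 0)]
      rw [show -α + 1 = 1 - α by ring]
      ring
    have hB_le : ∫ s, g s ^ (2:ℝ) ∂μ ≤ Cf θ := by
      have h1 : ∫ s, g s ^ (2:ℝ) ∂μ = ∫ s in Set.Ioc (0:ℝ) r, s ^ α * G (θ, s) ^ 2 := by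
        apply setIntegral_congr_fun measurableSet_Ioc
        intro s hs
        show g s ^ (2:ℝ) = s ^ α * G (θ, s) ^ 2
        rw [h2cast]; exact hgsq s hs
      rw [h1, hCfdef]
      apply setIntegral_mono_set ((hIGsq θ).mono_set Set.Ioo_subset_Icc_self)
      · exact (ae_restrict_iff' measurableSet_Ioo).2
          (ae_of_all _ fun s hs => mul_nonneg (Real.rpow_nonneg hs.1.le _) (sq_nonneg _))
      · exact HasSubset.Subset.eventuallyLE
          (fun s hs => ⟨hs.1, lt_of_le_of_lt hs.2 hr1⟩)
    have hBnn : 0 ≤ ∫ s, g s ^ (2:ℝ) ∂μ := by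
      apply setIntegral_nonneg measurableSet_Ioc
      intro s hs
      show (0:ℝ) ≤ g s ^ (2:ℝ)
      rw [h2cast]; exact sq_nonneg _
    have hAnn : (0:ℝ) ≤ r ^ (1-α) / (1-α) :=
      div_nonneg (Real.rpow_nonneg hr0.le _) (by linarith)
    -- |u θ r| ≤ √A √B
    have habs : |u θ r| ≤ (r ^ (1-α) / (1-α)) ^ ((1:ℝ)/2) * (∫ s, g s ^ (2:ℝ) ∂μ) ^ ((1:ℝ)/2) := by
      have h0 : |u θ r| ≤ ∫ s in Set.Ioc (0:ℝ) r, |G (θ, s)| := by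
        rw [hFTC θ r ⟨hr0.le, hr1.le⟩]
        simpa [Real.norm_eq_abs] using
          norm_integral_le_integral_norm (μ := volume.restrict (Set.Ioc 0 r))
            (f := fun s => G (θ, s))
      rw [← hfg_eq] at h0
      rw [← hA_eq]
      exact h0.trans hHolder
    have hsq := pow_le_pow_left₀ (abs_nonneg _) habs 2
    rw [sq_abs, mul_pow] at hsq
    have hApow : ((r ^ (1-α) / (1-α)) ^ ((1:ℝ)/2)) ^ 2 = r ^ (1-α) / (1-α) := by
      rw [← Real.rpow_natCast ((r ^ (1-α) / (1-α)) ^ ((1:ℝ)/2)) 2, ← Real.rpow_mul hAnn]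
      norm_num
    have hBpow : ((∫ s, g s ^ (2:ℝ) ∂μ) ^ ((1:ℝ)/2)) ^ 2 = ∫ s, g s ^ (2:ℝ) ∂μ := by
      rw [← Real.rpow_natCast ((∫ s, g s ^ (2:ℝ) ∂μ) ^ ((1:ℝ)/2)) 2, ← Real.rpow_mul hBnn]
      norm_num
    rw [hApow, hBpow] at hsq
    calc (u θ r) ^ 2 ≤ (r ^ (1-α) / (1-α)) * ∫ s, g s ^ (2:ℝ) ∂μ := hsq
      _ ≤ (r ^ (1-α) / (1-α)) * Cf θ := mul_le_mul_of_nonneg_left hB_le hAnn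
  -- integrate the key estimate in r over (0, δ)
  have hrpow_cont : Continuous (fun x : ℝ => x ^ (1-α)) := by
    rw [continuous_iff_continuousAt]
    intro x
    exact Real.continuousAt_rpow_const x (1-α) (Or.inr (by linarith))
  have hAθ : ∀ θ : ℝ, (∫ r in Set.Ioo (0:ℝ) δ, (u θ r) ^ 2)
      ≤ (δ ^ (2-α) / ((1-α) * (2-α))) * Cf θ := by
    intro θ
    have hInt : IntegrableOn (fun x : ℝ => x ^ (1-α) / (1-α) * Cf θ) (Set.Ioo 0 δ) :=
      ((((hrpow_cont.div_const _).mul continuous_const)).integrableOn_Icc).mono_set Set.Ioo_subset_Icc_self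
    have h1 : (∫ r in Set.Ioo (0:ℝ) δ, (u θ r) ^ 2)
        ≤ ∫ r in Set.Ioo (0:ℝ) δ, r ^ (1-α) / (1-α) * Cf θ := by
      apply integral_mono_of_nonneg
      · exact ae_of_all _ fun r => sq_nonneg _
      · exact hInt
      · exact (ae_restrict_iff' measurableSet_Ioo).2 (ae_of_all _ fun r hr => hkey θ r hr)
    have h2 : ∫ r in Set.Ioo (0:ℝ) δ, r ^ (1-α) / (1-α) * Cf θ
        = (Cf θ / (1-α)) * ∫ r in Set.Ioo (0:ℝ) δ, r ^ (1-α) := by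
      rw [← integral_const_mul]
      apply setIntegral_congr_fun measurableSet_Ioo
      intro r _
      ring
    have h3 : ∫ r in Set.Ioo (0:ℝ) δ, r ^ (1-α) = δ ^ (2-α) / (2-α) := by
      rw [← integral_Ioc_eq_integral_Ioo, ← intervalIntegral.integral_of_le hδ0.le,
        integral_rpow (Or.inl (show (-1:ℝ) < 1-α by linarith))]
      rw [Real.zero_rpow (by linarith : (1-α) + 1 ≠ 0)]
      rw [show (1-α) + 1 = 2 - α by ring]
      ring
    calc (∫ r in Set.Ioo (0:ℝ) δ, (u θ r) ^ 2)
        ≤ ∫ r in Set.Ioo (0:ℝ) δ, r ^ (1-α) / (1-α) * Cf θ := h1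
      _ = (Cf θ / (1-α)) * (δ ^ (2-α) / (2-α)) := by rw [h2, h3]
      _ = (δ ^ (2-α) / ((1-α) * (2-α))) * Cf θ := by
          field_simp
  -- continuity (hence integrability) of Cf
  have hCf_cont : Continuous Cf := by
    rw [continuous_iff_continuousAt]
    intro θ₀
    have hKcpt : IsCompact ((Set.Icc (θ₀-1) (θ₀+1)) ×ˢ (Set.Icc (0:ℝ) 1)) :=
      (isCompact_Icc).prod isCompact_Icc
    have hKsub : ((Set.Icc (θ₀-1) (θ₀+1)) ×ˢ (Set.Icc (0:ℝ) 1)) ⊆ S :=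
      Set.prod_mono (Set.subset_univ _) subset_rfl
    obtain ⟨M, hM⟩ := hKcpt.exists_bound_of_continuousOn (hGcont.mono hKsub)
    apply continuousAt_of_dominated (bound := fun _ : ℝ => M ^ 2)
    · apply Filter.Eventually.of_forall
      intro θ
      apply ContinuousOn.aestronglyMeasurable ?_ measurableSet_Ioo
      apply ContinuousOn.mul
      · intro s hs
        exact (Real.continuousAt_rpow_const s α (Or.inr hα0.le)).continuousWithinAt
      · exact ((hGc θ).mono Set.Ioo_subset_Icc_self).pow 2
    · filter_upwards [Icc_mem_nhds (by linarith : θ₀ - 1 < θ₀) (by linarith : θ₀ < θ₀ + 1)]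
        with θ hθ
      rw [ae_restrict_iff' measurableSet_Ioo]
      apply ae_of_all
      intro s hs
      have hGb : |G (θ, s)| ≤ M := by
        simpa [Real.norm_eq_abs] using hM (θ, s) ⟨hθ, ⟨hs.1.le, hs.2.le⟩⟩
      have h1 : s ^ α ≤ 1 :=
        Real.rpow_le_one hs.1.le hs.2.le hα0.le
      have h2 : G (θ, s) ^ 2 ≤ M ^ 2 := by
        rw [← sq_abs]
        exact pow_le_pow_left₀ (abs_nonneg _) hGb 2
      have hnn : (0:ℝ) ≤ s ^ α * G (θ, s) ^ 2 :=
        mul_nonneg (Real.rpow_nonneg hs.1.le _) (sq_nonneg _)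
      rw [Real.norm_eq_abs, abs_of_nonneg hnn]
      calc s ^ α * G (θ, s) ^ 2 ≤ 1 * M ^ 2 :=
            mul_le_mul h1 h2 (sq_nonneg _) one_pos.le
        _ = M ^ 2 := one_mul _
    · exact integrableOn_const measure_Ioo_lt_top.ne
    · rw [ae_restrict_iff' measurableSet_Ioo]
      apply ae_of_all
      intro s hs
      have hGsc : Continuous (fun θ : ℝ => G (θ, s)) := by
        rw [← continuousOn_univ]
        apply hGcont.comp (Continuous.continuousOn (by fun_prop))
        intro θ _
        simp [hSdef, hs.1.le, hs.2.le]
      exact (continuousAt_const.mul ((hGsc.continuousAt).pow 2))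
  have hCf_int : IntegrableOn Cf (Set.Ioo 0 (2 * Real.pi)) :=
    (hCf_cont.integrableOn_Icc).mono_set Set.Ioo_subset_Icc_self
  -- assembly
  have hRHS_eq : ∀ θ : ℝ, (∫ r in Set.Ioo (0:ℝ) 1, r ^ α * (deriv (u θ) r) ^ 2) = Cf θ := by
    intro θ
    apply setIntegral_congr_fun measurableSet_Ioo
    intro r hr
    show r ^ α * deriv (u θ) r ^ 2 = r ^ α * G (θ, r) ^ 2
    rw [hG_eq_deriv θ r hr]
  have hCint_nn : 0 ≤ ∫ θ in Set.Ioo 0 (2 * Real.pi), Cf θ :=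
    setIntegral_nonneg measurableSet_Ioo fun θ _ => hCnn θ
  have hmain : (∫ θ in Set.Ioo 0 (2 * Real.pi), ∫ r in Set.Ioo (0:ℝ) δ, (u θ r) ^ 2)
      ≤ (δ ^ (2-α) / ((1-α) * (2-α))) * ∫ θ in Set.Ioo 0 (2 * Real.pi), Cf θ := by
    rw [← integral_const_mul]
    apply integral_mono_of_nonneg
    · exact ae_of_all _ fun θ => setIntegral_nonneg measurableSet_Ioo fun r _ => sq_nonneg _
    · exact hCf_int.const_mul _
    · exact ae_of_all _ fun θ => hAθ θ
  have hcoef : δ ^ (2-α) / ((1-α) * (2-α)) ≤ 4 / (1-α) ^ 2 * δ ^ (2-α) := by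
    have hd : (0:ℝ) < δ ^ (2-α) := Real.rpow_pos_of_pos hδ0 _
    rw [div_le_iff₀ (by nlinarith : (0:ℝ) < (1-α) * (2-α))]
    have h4 : (4:ℝ) / (1-α)^2 * (1-α) * (2-α) ≥ 1 := by
      rw [ge_iff_le, div_mul_eq_mul_div, div_mul_eq_mul_div,
        le_div_iff₀ (by nlinarith : (0:ℝ) < (1-α)^2)]
      nlinarith
    nlinarith
  calc (∫ θ in Set.Ioo 0 (2 * Real.pi), ∫ r in Set.Ioo (0:ℝ) δ, (u θ r) ^ 2)
      ≤ (δ ^ (2-α) / ((1-α) * (2-α))) * ∫ θ in Set.Ioo 0 (2 * Real.pi), Cf θ := hmain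
    _ ≤ (4 / (1-α) ^ 2 * δ ^ (2-α)) * ∫ θ in Set.Ioo 0 (2 * Real.pi), Cf θ :=
        mul_le_mul_of_nonneg_right hcoef hCint_nn
    _ = 4 / (1-α) ^ 2 * δ ^ (2-α) *
          ∫ θ in Set.Ioo 0 (2 * Real.pi), ∫ r in Set.Ioo (0:ℝ) 1, r ^ α * (deriv (u θ) r) ^ 2 := by
        congr 1
        apply (setIntegral_congr_fun measurableSet_Ioo ?_).symm
        intro θ _
        exact hRHS_eq θ
end

section
/- Let α ∈ (0,1) and let (u_n)_{n∈ℕ} be a sequence of continuously differentiable functions u_n : [0,1] → ℝ with u_n(0) = u_n(1) = 0, such that sup_n ∫_0^1 r^α (u_n′(r))² dr < +∞. Then there exists a subsequence of (u_n) that is Cauchy (hence convergent) in L²(0,1). -/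
open MeasureTheory

section AuxLemmas
open Set BoundedContinuousFunction

lemma aux_rpow_sub {β : ℝ} (hβ0 : 0 < β) (hβ1 : β ≤ 1) {x y : ℝ} (hx : 0 ≤ x) (hxy : x ≤ y) :
    y ^ β - x ^ β ≤ (y - x) ^ β := by
  have h := NNReal.rpow_add_le_add_rpow (Real.toNNReal x) (Real.toNNReal (y - x)) hβ0.le hβ1
  rw [← Real.toNNReal_add hx (by linarith)] at h
  have h' : ((Real.toNNReal (x + (y - x)) ^ β : NNReal) : ℝ)
      ≤ ((Real.toNNReal x ^ β : NNReal) : ℝ) + ((Real.toNNReal (y - x) ^ β : NNReal) : ℝ) := by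
    exact_mod_cast h
  rw [NNReal.coe_rpow, NNReal.coe_rpow, NNReal.coe_rpow,
    Real.coe_toNNReal _ (by linarith : (0:ℝ) ≤ x + (y - x)),
    Real.coe_toNNReal _ hx, Real.coe_toNNReal _ (by linarith : (0:ℝ) ≤ y - x)] at h'
  have : x + (y - x) = y := by ring
  rw [this] at h'
  linarith

lemma aux_amgm {lam w d : ℝ} (hlam : 0 < lam) (hw : 0 < w) :
    |d| ≤ lam / 2 * (w * d ^ 2) + 1 / (2 * lam) * w⁻¹ := by
  have h2 : 2 * (lam * w) * |d| ≤ (lam * w) ^ 2 * d ^ 2 + 1 := by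
    nlinarith [sq_nonneg (lam * w * |d| - 1), sq_abs d]
  have hlw : 0 < 2 * (lam * w) := by positivity
  calc |d| = 2 * (lam * w) * |d| / (2 * (lam * w)) := by field_simp
    _ ≤ ((lam * w) ^ 2 * d ^ 2 + 1) / (2 * (lam * w)) := by gcongr
    _ = lam / 2 * (w * d ^ 2) + 1 / (2 * lam) * w⁻¹ := by field_simp

lemma aux_key {α B : ℝ} (hα0 : 0 < α) (hα1 : α < 1) {f : ℝ → ℝ}
    (hC1 : ContDiffOn ℝ 1 f (Icc 0 1))
    (hB : (∫ r in Ioo (0:ℝ) 1, r ^ α * (deriv f r) ^ 2) ≤ B)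
    {x y : ℝ} (hx : 0 ≤ x) (hxy : x ≤ y) (hy : y ≤ 1) {lam : ℝ} (hlam : 0 < lam) :
    |f y - f x| ≤ lam / 2 * B
      + 1 / (2 * lam) * ((y ^ (1 - α) - x ^ (1 - α)) / (1 - α)) := by
  have hsub : Ioo x y ⊆ Ioo (0:ℝ) 1 := Ioo_subset_Ioo hx hy
  have hsubIcc : Icc x y ⊆ Icc (0:ℝ) 1 := Icc_subset_Icc hx hy
  -- the derivative within
  set v : ℝ → ℝ := derivWithin f (Icc 0 1) with hv
  have hvcont : ContinuousOn v (Icc 0 1) :=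
    hC1.continuousOn_derivWithin (uniqueDiffOn_Icc one_pos) le_rfl
  have hveq : ∀ r ∈ Ioo (0:ℝ) 1, v r = deriv f r := fun r hr =>
    derivWithin_of_mem_nhds (Icc_mem_nhds hr.1 hr.2)
  have hHasDeriv : ∀ r ∈ Ioo (0:ℝ) 1, HasDerivAt f (deriv f r) r := by
    intro r hr
    have hd : DifferentiableWithinAt ℝ f (Icc 0 1) r :=
      (hC1.differentiableOn one_ne_zero) r (Ioo_subset_Icc_self hr)
    exact (hd.differentiableAt (Icc_mem_nhds hr.1 hr.2)).hasDerivAt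
  -- continuity of the weight
  have hrpow_cont : ContinuousOn (fun t : ℝ => t ^ α) (Icc 0 1) := by
    intro t ht
    exact (Real.continuousAt_rpow_const t α (Or.inr hα0.le)).continuousWithinAt
  -- integrability of the weighted square of the derivative on Ioo 0 1
  have hg_int : IntegrableOn (fun t => t ^ α * (deriv f t) ^ 2) (Ioo 0 1) volume := by
    have h1 : IntegrableOn (fun t => t ^ α * (v t) ^ 2) (Icc 0 1) volume :=
      (hrpow_cont.mul (hvcont.pow 2)).integrableOn_Icc
    exact ((h1.mono_set Ioo_subset_Icc_self).congr_fun
      (fun t ht => by beta_reduce; rw [hveq t ht]) measurableSet_Ioo)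
  have hg_nonneg : ∀ t ∈ Ioo (0:ℝ) 1, 0 ≤ t ^ α * (deriv f t) ^ 2 := fun t ht =>
    mul_nonneg (Real.rpow_nonneg ht.1.le _) (sq_nonneg _)
  -- integrability of deriv f on Ioo x y
  have hv_int : IntegrableOn v (Ioo x y) volume :=
    (hvcont.mono hsubIcc).integrableOn_Icc.mono_set Ioo_subset_Icc_self
  have hderiv_int : IntegrableOn (deriv f) (Ioo x y) volume :=
    hv_int.congr_fun (fun t ht => hveq t (hsub ht)) measurableSet_Ioo
  have hderiv_intvl : IntervalIntegrable (deriv f) volume x y :=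
    (intervalIntegrable_iff_integrableOn_Ioo_of_le hxy).2 hderiv_int
  -- FTC
  have hftc : f y - f x = ∫ t in Ioo x y, deriv f t := by
    rw [← intervalIntegral.integral_eq_sub_of_hasDerivAt_of_le hxy
      (hC1.continuousOn.mono hsubIcc)
      (fun t ht => hHasDeriv t (hsub ht)) hderiv_intvl,
      intervalIntegral.integral_of_le hxy, integral_Ioc_eq_integral_Ioo]
  -- the bound function
  set b : ℝ → ℝ := fun t =>
    lam / 2 * (t ^ α * (deriv f t) ^ 2) + 1 / (2 * lam) * t ^ (-α) with hbdef
  -- integrability of t ^ (-α) on Ioo x y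
  have hrpow_int : IntegrableOn (fun t : ℝ => t ^ (-α)) (Ioo x y) volume :=
    (intervalIntegrable_iff_integrableOn_Ioo_of_le hxy).1
      (intervalIntegral.intervalIntegrable_rpow' (by linarith))
  have hb_int : IntegrableOn b (Ioo x y) volume :=
    (((hg_int.mono_set hsub).const_mul _).add (hrpow_int.const_mul _))
  -- pointwise bound
  have hptw : ∀ t ∈ Ioo x y, |deriv f t| ≤ b t := by
    intro t ht
    have ht0 : 0 < t := lt_of_le_of_lt hx ht.1
    have := aux_amgm (d := deriv f t) hlam (Real.rpow_pos_of_pos ht0 α)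
    rwa [← Real.rpow_neg ht0.le] at this
  -- putting things together
  have hmain : |f y - f x| ≤ ∫ t in Ioo x y, b t := by
    rw [hftc]
    have habs : |∫ t in Ioo x y, deriv f t| ≤ ∫ t in Ioo x y, |deriv f t| := by
      simpa [Real.norm_eq_abs] using
        norm_integral_le_integral_norm (μ := volume.restrict (Ioo x y)) (deriv f)
    refine habs.trans ?_
    refine integral_mono_of_nonneg (ae_of_all _ fun t => abs_nonneg _) hb_int ?_
    filter_upwards [ae_restrict_mem measurableSet_Ioo] with t ht
    exact hptw t ht
  have hsplit : (∫ t in Ioo x y, b t)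
      = lam / 2 * (∫ t in Ioo x y, t ^ α * (deriv f t) ^ 2)
        + 1 / (2 * lam) * (∫ t in Ioo x y, t ^ (-α)) := by
    rw [hbdef, integral_add ((hg_int.mono_set hsub).const_mul _)
      (hrpow_int.const_mul _), integral_const_mul, integral_const_mul]
  have h1 : (∫ t in Ioo x y, t ^ α * (deriv f t) ^ 2) ≤ B := by
    refine le_trans (setIntegral_mono_set hg_int ?_ (HasSubset.Subset.eventuallyLE hsub)) hB
    filter_upwards [ae_restrict_mem measurableSet_Ioo] with t ht
    exact hg_nonneg t ht
  have h2 : (∫ t in Ioo x y, t ^ (-α)) = (y ^ (1 - α) - x ^ (1 - α)) / (1 - α) := by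
    rw [← integral_Ioc_eq_integral_Ioo, ← intervalIntegral.integral_of_le hxy,
      integral_rpow (Or.inl (by linarith))]
    rw [neg_add_eq_sub]
  rw [hsplit, h2] at hmain
  have hlam2 : (0:ℝ) < 1 / (2 * lam) := by positivity
  nlinarith [hmain, mul_le_mul_of_nonneg_left h1 (by positivity : (0:ℝ) ≤ lam / 2)]

end AuxLemmas

section Main
open Set BoundedContinuousFunction

/-- **Compactness of the embedding `H¹₀(Λ;w) ↪ L²(Λ)`, sequential form**
(Lemma 3.2 of the paper), for `Λ = (0,1)` and `w(r) = r^α`. The Cauchy property is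
stated for the `L²(0,1)` norms of differences. -/
theorem stmt_6 (α : ℝ) (hα : α ∈ Set.Ioo (0 : ℝ) 1) (u : ℕ → ℝ → ℝ)
    (hC1 : ∀ n, ContDiffOn ℝ 1 (u n) (Set.Icc 0 1))
    (hbd0 : ∀ n, u n 0 = 0)
    (hbd1 : ∀ n, u n 1 = 0)
    (hbound : ∃ B : ℝ, ∀ n,
      (∫ r in Set.Ioo (0 : ℝ) 1, r ^ α * (deriv (u n) r) ^ 2) ≤ B) :
    ∃ ψ : ℕ → ℕ, StrictMono ψ ∧
      ∀ ε : ℝ, 0 < ε → ∃ N : ℕ, ∀ m ≥ N, ∀ k ≥ N,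
        Real.sqrt (∫ r in Set.Ioo (0 : ℝ) 1, (u (ψ m) r - u (ψ k) r) ^ 2) < ε := by
  obtain ⟨hα0, hα1⟩ := hα
  obtain ⟨B, hB⟩ := hbound
  set β : ℝ := 1 - α with hβdef
  have hβ0 : 0 < β := by simp only [hβdef]; linarith
  have hβ1 : β ≤ 1 := by simp only [hβdef]; linarith
  have hB0 : 0 ≤ B :=
    le_trans (setIntegral_nonneg measurableSet_Ioo fun t ht =>
      mul_nonneg (Real.rpow_nonneg ht.1.le _) (sq_nonneg _)) (hB 0)
  have key : ∀ n, ∀ x y : ℝ, 0 ≤ x → x ≤ y → y ≤ 1 → ∀ lam : ℝ, 0 < lam →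
      |u n y - u n x| ≤ lam / 2 * B + 1 / (2 * lam) * ((y ^ β - x ^ β) / β) :=
    fun n x y hx hxy hy lam hlam => aux_key hα0 hα1 (hC1 n) (hB n) hx hxy hy hlam
  -- uniform bound
  set M : ℝ := B / 2 + 1 / (2 * β) with hM
  have hubd : ∀ n, ∀ t : ℝ, t ∈ Icc (0:ℝ) 1 → |u n t| ≤ M := by
    intro n t ht
    have h := key n 0 t le_rfl ht.1 ht.2 1 one_pos
    rw [hbd0 n, sub_zero, Real.zero_rpow hβ0.ne'] at h
    have htβ : t ^ β ≤ 1 := Real.rpow_le_one ht.1 ht.2 hβ0.le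
    have hdiv : (t ^ β - 0) / β ≤ 1 / β := by
      rw [div_le_div_iff₀ hβ0 hβ0]; nlinarith
    have h2 : 1 / (2 * 1) * ((t ^ β - 0) / β) ≤ 1 / (2 * β) := by
      rw [div_mul_eq_mul_div, one_mul, div_div,
        div_le_div_iff₀ (by positivity) (by positivity)]
      nlinarith [mul_le_mul_of_nonneg_right htβ hβ0.le]
    calc |u n t| ≤ 1 / 2 * B + 1 / (2 * 1) * ((t ^ β - 0) / β) := h
      _ ≤ M := by rw [hM]; linarith
  -- bounded continuous functions on Icc 0 1
  haveI : CompactSpace (Icc (0:ℝ) 1) := isCompact_iff_compactSpace.mp isCompact_Icc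
  set F : ℕ → (Icc (0:ℝ) 1 →ᵇ ℝ) := fun n =>
    BoundedContinuousFunction.mkOfCompact ⟨(Icc (0:ℝ) 1).restrict (u n), ((hC1 n).continuousOn).restrict⟩ with hF
  have hFapp : ∀ n p, F n p = u n ↑p := fun n p => rfl
  have in_s : ∀ (f : Icc (0:ℝ) 1 →ᵇ ℝ) (x : Icc (0:ℝ) 1), f ∈ Set.range F → f x ∈ Icc (-M) M := by
    rintro f x ⟨n, rfl⟩
    rw [hFapp]
    exact mem_Icc.2 (abs_le.1 (hubd n x x.2))
  -- equicontinuity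
  have hequi : Equicontinuous ((↑) : Set.range F → Icc (0:ℝ) 1 → ℝ) := by
    refine UniformEquicontinuous.equicontinuous ?_
    rw [Metric.uniformEquicontinuous_iff]
    intro ε hε
    set lam : ℝ := ε / (2 * (B + 1)) with hlam
    have hlam0 : 0 < lam := by positivity
    have hc0 : 0 < ε * lam * β / 2 := by positivity
    set δ : ℝ := (ε * lam * β / 2) ^ (1/β) with hδ
    have hδ0 : 0 < δ := Real.rpow_pos_of_pos hc0 _
    have hδβ : δ ^ β = ε * lam * β / 2 := by
      rw [hδ, ← Real.rpow_mul hc0.le, one_div_mul_cancel hβ0.ne', Real.rpow_one]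
    refine ⟨δ, hδ0, ?_⟩
    -- main estimate for ordered pairs
    have main : ∀ n, ∀ x y : Icc (0:ℝ) 1, (x:ℝ) ≤ y → dist x y < δ →
        |u n ↑y - u n ↑x| ≤ ε/2 := by
      intro n x y hxy hd
      have hdist : (y:ℝ) - x < δ := by
        rw [Subtype.dist_eq, Real.dist_eq, abs_sub_comm, abs_of_nonneg (by linarith)] at hd
        exact hd
      have h := key n x y x.2.1 hxy y.2.2 lam hlam0
      have hsub : (y:ℝ) ^ β - (x:ℝ) ^ β ≤ ε * lam * β / 2 := by
        calc (y:ℝ) ^ β - (x:ℝ) ^ β ≤ ((y:ℝ) - x) ^ β := aux_rpow_sub hβ0 hβ1 x.2.1 hxy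
          _ ≤ δ ^ β := Real.rpow_le_rpow (by linarith) hdist.le hβ0.le
          _ = ε * lam * β / 2 := hδβ
      have h1 : lam / 2 * B ≤ ε / 4 := by
        have hB1 : (0:ℝ) < B + 1 := by linarith
        rw [hlam, div_div, div_mul_eq_mul_div,
          div_le_div_iff₀ (by positivity) (by norm_num)]
        nlinarith
      have h2 : 1 / (2 * lam) * (((y:ℝ) ^ β - (x:ℝ) ^ β) / β) ≤ ε / 4 := by
        have : ((y:ℝ) ^ β - (x:ℝ) ^ β) / β ≤ ε * lam / 2 := by
          rw [div_le_iff₀ hβ0]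
          calc (y:ℝ) ^ β - (x:ℝ) ^ β ≤ ε * lam * β / 2 := hsub
            _ = ε * lam / 2 * β := by ring
        calc 1 / (2 * lam) * (((y:ℝ) ^ β - (x:ℝ) ^ β) / β) ≤ 1 / (2 * lam) * (ε * lam / 2) := by
              gcongr
          _ = ε / 4 := by field_simp; ring
      linarith
    rintro x y hd ⟨f, n, rfl⟩
    simp only [hFapp]
    rcases le_total (x:ℝ) (y:ℝ) with h | h
    · have := main n x y h hd
      rw [Real.dist_eq, abs_sub_comm]
      linarith
    · have := main n y x h (dist_comm x y ▸ hd)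
      rw [Real.dist_eq]
      linarith
  -- Arzelà–Ascoli
  have hcomp : IsCompact (closure (Set.range F)) :=
    BoundedContinuousFunction.arzela_ascoli (Icc (-M) M) isCompact_Icc (Set.range F) in_s hequi
  obtain ⟨L, -, ψ, hψ, hconv⟩ :=
    hcomp.tendsto_subseq (fun n => subset_closure (Set.mem_range_self n))
  refine ⟨ψ, hψ, ?_⟩
  intro ε hε
  have hcs : CauchySeq (F ∘ ψ) := hconv.cauchySeq
  rw [Metric.cauchySeq_iff] at hcs
  obtain ⟨N, hN⟩ := hcs (ε/2) (by positivity)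
  refine ⟨N, fun m hm k hk => ?_⟩
  have hd : dist (F (ψ m)) (F (ψ k)) < ε/2 := hN m hm k hk
  have hpt : ∀ t ∈ Ioo (0:ℝ) 1, (u (ψ m) t - u (ψ k) t) ^ 2 ≤ (ε/2) ^ 2 := by
    intro t ht
    have htI : t ∈ Icc (0:ℝ) 1 := Ioo_subset_Icc_self ht
    have h1 : dist (F (ψ m) ⟨t, htI⟩) (F (ψ k) ⟨t, htI⟩) ≤ dist (F (ψ m)) (F (ψ k)) :=
      BoundedContinuousFunction.dist_coe_le_dist _
    rw [hFapp, hFapp, Real.dist_eq] at h1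
    have habs : |u (ψ m) t - u (ψ k) t| ≤ ε/2 := le_trans h1 hd.le
    have := abs_le.1 habs
    nlinarith
  have hint1 : IntegrableOn (fun t => (u (ψ m) t - u (ψ k) t) ^ 2) (Ioo 0 1) volume :=
    ((((hC1 (ψ m)).continuousOn.sub (hC1 (ψ k)).continuousOn).pow 2).integrableOn_Icc).mono_set
      Ioo_subset_Icc_self
  have hle : (∫ t in Ioo (0:ℝ) 1, (u (ψ m) t - u (ψ k) t) ^ 2) ≤ (ε/2) ^ 2 := by
    have h2 : (∫ t in Ioo (0:ℝ) 1, (u (ψ m) t - u (ψ k) t) ^ 2)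
        ≤ ∫ _t in Ioo (0:ℝ) 1, (ε/2) ^ 2 :=
      setIntegral_mono_on hint1
        (integrableOn_const (by simp [Real.volume_Ioo]))
        measurableSet_Ioo hpt
    simpa [Real.volume_Ioo] using h2
  calc Real.sqrt (∫ t in Ioo (0:ℝ) 1, (u (ψ m) t - u (ψ k) t) ^ 2)
      ≤ Real.sqrt ((ε/2) ^ 2) := Real.sqrt_le_sqrt hle
    _ = ε/2 := Real.sqrt_sq (by positivity)
    _ < ε := by linarith

end Main
end

section
/- Let T > 0 and let E ⊂ (0,T) be a Lebesgue-measurable set with positive measure. Let ℓ ∈ (0,T) be a Lebesgue density point of E, i.e. |E ∩ (ℓ−r, ℓ+r)|/(2r) → 1 as r → 0⁺. Then for every q ∈ (0,1) there exists a strictly decreasing sequence (ℓ_m)_{m≥1} ⊂ (ℓ, T] converging to ℓ such that, for every m ≥ 1, ℓ_{m+1} − ℓ_{m+2} = q (ℓ_m − ℓ_{m+1}) and |E ∩ (ℓ_{m+1}, ℓ_m)| ≥ (ℓ_m − ℓ_{m+1})/3. -/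
open MeasureTheory

/-- **Telescoping sequence of intervals shrinking to a Lebesgue density point of a
measurable set** (Lemma 5.3 of the paper, after Liu–Wu–Yang–Zhang). The sequence
`(ℓ_m)_{m≥1}` of the paper is encoded as `l : ℕ → ℝ` with `l m = ℓ_{m+1}`. -/
theorem stmt_10 (T : ℝ) (hT : 0 < T) (E : Set ℝ) (hEmeas : MeasurableSet E)
    (hEsub : E ⊆ Set.Ioo 0 T) (hEpos : 0 < volume E)
    (ℓ : ℝ) (hℓ : ℓ ∈ Set.Ioo 0 T)
    (hdensity : Filter.Tendsto
      (fun r : ℝ => volume (E ∩ Set.Ioo (ℓ - r) (ℓ + r)) / ENNReal.ofReal (2 * r))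
      (nhdsWithin 0 (Set.Ioi 0)) (nhds 1)) :
    ∀ q ∈ Set.Ioo (0 : ℝ) 1, ∃ l : ℕ → ℝ,
      StrictAnti l ∧
      (∀ m : ℕ, l m ∈ Set.Ioc ℓ T) ∧
      Filter.Tendsto l Filter.atTop (nhds ℓ) ∧
      (∀ m : ℕ, l (m + 1) - l (m + 2) = q * (l m - l (m + 1))) ∧
      (∀ m : ℕ, ENNReal.ofReal ((l m - l (m + 1)) / 3)
        ≤ volume (E ∩ Set.Ioo (l (m + 1)) (l m))) := by
  intro q hq
  obtain ⟨hq0, hq1⟩ := hq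
  set ε : ℝ := (1 - q) / 6 with hε
  have hε0 : 0 < ε := by rw [hε]; linarith
  have hε1 : 1 - ε < 1 := by linarith
  -- eventually the density ratio exceeds 1 - ε
  have hev : ∀ᶠ s in nhdsWithin 0 (Set.Ioi (0:ℝ)),
      ENNReal.ofReal (1 - ε) <
        volume (E ∩ Set.Ioo (ℓ - s) (ℓ + s)) / ENNReal.ofReal (2 * s) := by
    apply hdensity.eventually (eventually_gt_nhds ?_)
    calc ENNReal.ofReal (1 - ε) < ENNReal.ofReal 1 := by
          exact ENNReal.ofReal_lt_ofReal_iff (by norm_num) |>.2 hε1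
      _ = 1 := by simp
  rw [Filter.eventually_iff, mem_nhdsGT_iff_exists_Ioo_subset] at hev
  obtain ⟨δ, hδ, hδsub⟩ := hev
  simp only [Set.mem_Ioi] at hδ
  -- choose the scale r
  set r : ℝ := min (δ / 2) (T - ℓ) with hr
  have hr0 : 0 < r := lt_min (by linarith) (by linarith [hℓ.2])
  have hrδ : r < δ := lt_of_le_of_lt (min_le_left _ _) (by linarith)
  have hrT : r ≤ T - ℓ := min_le_right _ _
  -- key density estimate at all scales s ≤ r
  have hkey : ∀ s : ℝ, 0 < s → s ≤ r →
      ENNReal.ofReal ((1 - ε) * (2 * s)) ≤ volume (E ∩ Set.Ioo (ℓ - s) (ℓ + s)) := by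
    intro s hs0 hsr
    have hmem : s ∈ Set.Ioo (0:ℝ) δ := ⟨hs0, lt_of_le_of_lt hsr hrδ⟩
    have h := hδsub hmem
    simp only [Set.mem_setOf_eq] at h
    have h2s : (ENNReal.ofReal (2 * s)) ≠ 0 := by
      exact ne_of_gt (ENNReal.ofReal_pos.2 (by linarith))
    have h2s' : (ENNReal.ofReal (2 * s)) ≠ ⊤ := ENNReal.ofReal_ne_top
    rw [ENNReal.ofReal_mul (by linarith)]
    calc ENNReal.ofReal (1 - ε) * ENNReal.ofReal (2 * s)
        ≤ (volume (E ∩ Set.Ioo (ℓ - s) (ℓ + s)) / ENNReal.ofReal (2 * s))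
            * ENNReal.ofReal (2 * s) := by
          exact mul_le_mul_left h.le _
      _ = volume (E ∩ Set.Ioo (ℓ - s) (ℓ + s)) := ENNReal.div_mul_cancel h2s h2s'
  -- define the sequence
  refine ⟨fun m => ℓ + r * q ^ m, ?_, ?_, ?_, ?_, ?_⟩
  · intro a b hab
    have : q ^ b < q ^ a := pow_lt_pow_right_of_lt_one₀ hq0 hq1 hab
    have := mul_lt_mul_of_pos_left this hr0
    show ℓ + r * q ^ b < ℓ + r * q ^ a
    linarith
  · intro m
    constructor
    · have : 0 < r * q ^ m := by positivity
      show ℓ < ℓ + r * q ^ m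
      linarith
    · have hq1' : q ^ m ≤ 1 := pow_le_one₀ (le_of_lt hq0) (le_of_lt hq1)
      have : r * q ^ m ≤ r * 1 := by
        apply mul_le_mul_of_nonneg_left hq1' hr0.le
      show ℓ + r * q ^ m ≤ T
      nlinarith
  · have : Filter.Tendsto (fun m : ℕ => q ^ m) Filter.atTop (nhds 0) :=
      tendsto_pow_atTop_nhds_zero_of_lt_one (le_of_lt hq0) hq1
    have h2 := this.const_mul r
    have h3 := h2.const_add ℓ
    simpa using h3
  · intro m; ring
  · intro m
    set s : ℝ := r * q ^ m with hs
    have hs0 : 0 < s := by positivity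
    have hsr : s ≤ r := by
      have hq1' : q ^ m ≤ 1 := pow_le_one₀ (le_of_lt hq0) (le_of_lt hq1)
      nlinarith
    have hstep1 : volume (E ∩ Set.Ioo (ℓ - s) (ℓ + s))
        ≤ volume (E ∩ Set.Ioo ℓ (ℓ + s)) + ENNReal.ofReal s := by
      calc volume (E ∩ Set.Ioo (ℓ - s) (ℓ + s))
          ≤ volume ((E ∩ Set.Ioo ℓ (ℓ + s)) ∪ Set.Ioc (ℓ - s) ℓ) := by
            apply measure_mono
            rintro x ⟨hxE, hx1, hx2⟩
            rcases le_or_gt x ℓ with h | h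
            · exact Or.inr ⟨hx1, h⟩
            · exact Or.inl ⟨hxE, h, hx2⟩
        _ ≤ volume (E ∩ Set.Ioo ℓ (ℓ + s)) + volume (Set.Ioc (ℓ - s) ℓ) :=
            measure_union_le _ _
        _ = volume (E ∩ Set.Ioo ℓ (ℓ + s)) + ENNReal.ofReal s := by
            rw [Real.volume_Ioc]; ring_nf
    have hstep2 : volume (E ∩ Set.Ioo ℓ (ℓ + s))
        ≤ volume (E ∩ Set.Ioo (ℓ + r * q ^ (m+1)) (ℓ + r * q ^ m))
            + ENNReal.ofReal (q * s) := by
      calc volume (E ∩ Set.Ioo ℓ (ℓ + s))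
          ≤ volume ((E ∩ Set.Ioo (ℓ + r * q ^ (m+1)) (ℓ + r * q ^ m))
              ∪ Set.Ioc ℓ (ℓ + r * q ^ (m+1))) := by
            apply measure_mono
            rintro x ⟨hxE, hx1, hx2⟩
            rcases le_or_gt x (ℓ + r * q ^ (m+1)) with h | h
            · exact Or.inr ⟨hx1, h⟩
            · exact Or.inl ⟨hxE, h, hx2⟩
        _ ≤ _ + volume (Set.Ioc ℓ (ℓ + r * q ^ (m+1))) := measure_union_le _ _
        _ = _ + ENNReal.ofReal (q * s) := by
            rw [Real.volume_Ioc]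
            congr 1
            congr 1
            rw [hs]; ring
    -- combine
    have hM : volume (E ∩ Set.Ioo (ℓ - s) (ℓ + s))
        ≤ volume (E ∩ Set.Ioo (ℓ + r * q ^ (m+1)) (ℓ + r * q ^ m))
            + ENNReal.ofReal (q * s + s) := by
      calc volume (E ∩ Set.Ioo (ℓ - s) (ℓ + s))
          ≤ (volume (E ∩ Set.Ioo (ℓ + r * q ^ (m+1)) (ℓ + r * q ^ m))
              + ENNReal.ofReal (q * s)) + ENNReal.ofReal s :=
            le_trans hstep1 (add_le_add_left hstep2 _)
        _ = _ := by
            rw [add_assoc, ← ENNReal.ofReal_add (by positivity) (by positivity)]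
    have hlow := hkey s hs0 hsr
    have hd : (ℓ + r * q ^ m - (ℓ + r * q ^ (m + 1))) = s * (1 - q) := by
      rw [hs]; ring
    rw [hd]
    have hnum : s * (1 - q) / 3 + (q * s + s) ≤ (1 - ε) * (2 * s) := by
      rw [hε]; nlinarith
    have : ENNReal.ofReal (s * (1 - q) / 3) + ENNReal.ofReal (q * s + s)
        ≤ volume (E ∩ Set.Ioo (ℓ + r * q ^ (m+1)) (ℓ + r * q ^ m))
            + ENNReal.ofReal (q * s + s) := by
      calc ENNReal.ofReal (s * (1 - q) / 3) + ENNReal.ofReal (q * s + s)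
          = ENNReal.ofReal (s * (1 - q) / 3 + (q * s + s)) := by
            rw [← ENNReal.ofReal_add (by nlinarith) (by positivity)]
        _ ≤ ENNReal.ofReal ((1 - ε) * (2 * s)) := ENNReal.ofReal_le_ofReal hnum
        _ ≤ volume (E ∩ Set.Ioo (ℓ - s) (ℓ + s)) := hlow
        _ ≤ _ := hM
    exact (ENNReal.add_le_add_iff_right ENNReal.ofReal_ne_top).1 this
end
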